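/- arXiv:2002.05974 — 8 statements merged into one kernel-verified Lean document; each statement's English description precedes it below -/
import Mathlib

section
/- For every finitely generated group Γ: ks_{A4}(Γ) = ks_{V4}^{A4}(Γ) + ks_{ℤ3}^{A4}(Γ) − 1 + (ks_{A4}^w(Γ) − 4·(|Hom(Γ, ℤ3)| − 1) − |Hom(Γ, V4)|)/12. -/
/-- The conjugation equivalence on homomorphisms `Γ →* G`. -/
def homConj (Γ G : Type*) [Group Γ] [Group G] : Setoid (Γ →* G) where
  r φ ψ := ∃ g : G, ∀ x, ψ x = g * φ x * g⁻¹
  iseqv := by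
    refine ⟨fun φ => ⟨1, by simp⟩, ?_, ?_⟩
    · rintro φ ψ ⟨g, hg⟩
      exact ⟨g⁻¹, fun x => by rw [hg x]; group⟩
    · rintro φ ψ χ ⟨g, hg⟩ ⟨h, hh⟩
      exact ⟨h * g, fun x => by rw [hh x, hg x]; group⟩

/-- `ks G Γ`: number of conjugacy classes of homomorphisms `Γ →* G`. -/
noncomputable def ks (G Γ : Type*) [Group G] [Group Γ] : ℕ :=
  Nat.card (Quotient (homConj Γ G))

/-- `ksw G Γ`: number of homomorphisms `Γ →* G`. -/
noncomputable def ksw (G Γ : Type*) [Group G] [Group Γ] : ℕ :=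
  Nat.card (Γ →* G)

/-- `ksSub G H Γ`: the number of conjugacy classes of homomorphisms `Γ →* G` whose
image is contained in some subgroup of `G` isomorphic to `H`. -/
noncomputable def ksSub (G : Type*) [Group G] (H : Type*) [Group H] (Γ : Type*) [Group Γ] : ℕ :=
  Nat.card (Quotient (Setoid.comap
    (Subtype.val : {φ : Γ →* G // ∃ K : Subgroup G, Nonempty (K ≃* H) ∧ φ.range ≤ K} → (Γ →* G))
    (homConj Γ G)))

/-- Number of conjugacy classes of homomorphisms `Γ →* G` satisfying a property `P`. -/
noncomputable def ksRestrict (G Γ : Type*) [Group G] [Group Γ] (P : (Γ →* G) → Prop) : ℕ :=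
  Nat.card (Quotient (Setoid.comap
    (Subtype.val : {φ : Γ →* G // P φ} → (Γ →* G)) (homConj Γ G)))

/-- A maximal abelian subgroup. -/
def IsMaximalAbelian {G : Type*} [Group G] (K : Subgroup G) : Prop :=
  IsMulCommutative K ∧ ∀ K' : Subgroup G, IsMulCommutative K' → K ≤ K' → K' = K

abbrev A4 : Type := alternatingGroup (Fin 4)
abbrev A5 : Type := alternatingGroup (Fin 5)
abbrev V4 : Type := Multiplicative (ZMod 2 × ZMod 2)
abbrev Z3 : Type := Multiplicative (ZMod 3)
abbrev Z5 : Type := Multiplicative (ZMod 5)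
/-- The free abelian group of rank `g`, written multiplicatively. -/
abbrev Zg (g : ℕ) : Type := Multiplicative (Fin g → ℤ)


/-! ### Auxiliary general lemmas -/

section SetoidLemmas
variable {α : Type*} (s : Setoid α)

def quotRestrictCongr {P Q : α → Prop} (h : ∀ a, P a ↔ Q a) :
    Quotient (s.comap (Subtype.val : {a // P a} → α)) ≃
      Quotient (s.comap (Subtype.val : {a // Q a} → α)) :=
  Quotient.congr (Equiv.subtypeEquivRight h) (fun _ _ => Iff.rfl)

def quotRestrictTrue :
    Quotient s ≃ Quotient (s.comap (Subtype.val : {a // True} → α)) :=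
  Quotient.congr (Equiv.subtypeUnivEquiv (fun _ => trivial)).symm (fun _ _ => Iff.rfl)

open Classical in
noncomputable def quotRestrictSplit (P Q : α → Prop)
    (hP : ∀ a b, s.r a b → P a → P b)
    (hdisj : ∀ a, P a → Q a → False) :
    Quotient (s.comap (Subtype.val : {a // P a ∨ Q a} → α)) ≃
      Quotient (s.comap (Subtype.val : {a // P a} → α)) ⊕
        Quotient (s.comap (Subtype.val : {a // Q a} → α)) where
  toFun := Quotient.lift
    (fun x => if h : P x.1 then Sum.inl (Quotient.mk _ ⟨x.1, h⟩)
      else Sum.inr (Quotient.mk _ ⟨x.1, x.2.resolve_left h⟩))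
    (by
      rintro ⟨a, ha⟩ ⟨b, hb⟩ hab
      by_cases h : P a
      · have hb' : P b := hP a b hab h
        simp only [h, hb', dif_pos]
        exact congrArg Sum.inl (Quotient.sound hab)
      · have hb' : ¬ P b := fun hPb => h (hP b a (s.symm hab) hPb)
        simp only [h, hb', dif_neg, not_false_iff]
        exact congrArg Sum.inr (Quotient.sound hab))
  invFun := Sum.elim
    (Quotient.lift (fun x => Quotient.mk _ (⟨x.1, Or.inl x.2⟩ : {a // P a ∨ Q a}))
      (fun _ _ hab => Quotient.sound hab))
    (Quotient.lift (fun x => Quotient.mk _ (⟨x.1, Or.inr x.2⟩ : {a // P a ∨ Q a}))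
      (fun _ _ hab => Quotient.sound hab))
  left_inv := by
    refine Quotient.ind ?_
    rintro ⟨a, ha⟩
    by_cases h : P a <;> simp [h]
  right_inv := by
    rintro (q | q) <;> induction q using Quotient.ind with | _ x => ?_
    · simp [x.2]
    · have : ¬ P x.1 := fun hp => hdisj x.1 hp x.2
      simp [this]

open Classical in
noncomputable def subtypeOrSplit (P Q : α → Prop) (hdisj : ∀ a, P a → Q a → False) :
    {a // P a ∨ Q a} ≃ {a // P a} ⊕ {a // Q a} where
  toFun x := if h : P x.1 then Sum.inl ⟨x.1, h⟩ else Sum.inr ⟨x.1, x.2.resolve_left h⟩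
  invFun := Sum.elim (fun x => ⟨x.1, Or.inl x.2⟩) (fun x => ⟨x.1, Or.inr x.2⟩)
  left_inv := by rintro ⟨a, ha⟩; by_cases h : P a <;> simp [h]
  right_inv := by
    rintro (x | x)
    · simp [x.2]
    · have : ¬ P x.1 := fun hp => hdisj x.1 hp x.2
      simp [this]

end SetoidLemmas

theorem finite_monoidHom (Γ G : Type*) [Group Γ] [Group G] (hΓ : Group.FG Γ) [Finite G] :
    Finite (Γ →* G) := by
  obtain ⟨S, hS⟩ := hΓ.1
  refine Finite.of_injective (fun φ => (fun s : S => φ s.1)) ?_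
  intro φ ψ h
  refine MonoidHom.eq_of_eqOn_dense hS ?_
  intro x hx
  exact congrFun h ⟨x, hx⟩

theorem ofInjective_symm_coe {G H : Type*} [Group G] [Group H]
    {ι : H →* G} (hι : Function.Injective ι) (y : ι.range) :
    ι ((MonoidHom.ofInjective hι).symm y) = y := by
  conv_rhs => rw [← (MonoidHom.ofInjective hι).apply_symm_apply y]
  rw [← MonoidHom.ofInjective_apply hι]

noncomputable def homEquivRange {Γ G H : Type*} [Group Γ] [Group G] [Group H]
    (ι : H →* G) (hι : Function.Injective ι) :
    (Γ →* H) ≃ {φ : Γ →* G // φ.range ≤ ι.range} where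
  toFun ψ := ⟨ι.comp ψ, by rintro _ ⟨x, rfl⟩; exact ⟨ψ x, rfl⟩⟩
  invFun φ := ((MonoidHom.ofInjective hι).symm.toMonoidHom.comp
    (φ.1.codRestrict ι.range (fun x => φ.2 ⟨x, rfl⟩)))
  left_inv ψ := by
    ext x
    apply hι
    simp only [MonoidHom.comp_apply, MonoidHom.codRestrict_apply]
    exact ofInjective_symm_coe hι ⟨ι (ψ x), ⟨ψ x, rfl⟩⟩
  right_inv φ := by
    ext x
    simp only [MonoidHom.comp_apply, MonoidHom.codRestrict_apply]
    exact ofInjective_symm_coe hι ⟨φ.1 x, _⟩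

theorem range_eq_bot_iff {Γ G : Type*} [Group Γ] [Group G] {φ : Γ →* G} :
    φ.range = ⊥ ↔ φ = 1 := by
  constructor
  · intro h
    ext x
    have : φ x ∈ φ.range := ⟨x, rfl⟩
    rw [h, Subgroup.mem_bot] at this
    simp [this]
  · rintro rfl
    exact MonoidHom.range_one

/-! ### Order three subgroups -/

section ZThree
variable {G : Type*} [Group G] {g : G}

theorem pow_mod_three (hg : g ^ 3 = 1) (n : ℕ) : g ^ (n % 3) = g ^ n := by
  conv_rhs => rw [← Nat.div_add_mod n 3, pow_add, pow_mul, hg, one_pow, one_mul]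

theorem zsub_e2 (hg : g ^ 3 = 1) : g * g ^ 2 = 1 := by rw [← pow_succ']; exact hg
theorem zsub_e3 (hg : g ^ 3 = 1) : g ^ 2 * g = 1 := by rw [← pow_succ]; exact hg
theorem zsub_e4 (hg : g ^ 3 = 1) : g ^ 2 * g ^ 2 = g := by
  rw [← pow_add]
  show g ^ (3 + 1) = g
  rw [pow_add, hg, one_mul, pow_one]

/-- The subgroup `{1, g, g²}` for `g` with `g ^ 3 = 1`. -/
def zsub (g : G) (hg : g ^ 3 = 1) : Subgroup G where
  carrier := {1, g, g ^ 2}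
  one_mem' := Or.inl rfl
  mul_mem' := by
    intro a b ha hb
    simp only [Set.mem_insert_iff, Set.mem_singleton_iff] at *
    rcases ha with rfl | rfl | rfl <;> rcases hb with rfl | rfl | rfl <;>
      (try simp only [one_mul, mul_one]) <;>
      first
      | tauto
      | exact Or.inl (zsub_e2 hg)
      | exact Or.inl (zsub_e3 hg)
      | exact Or.inr (Or.inl (zsub_e4 hg))
      | exact Or.inr (Or.inr (sq _).symm)
  inv_mem' := by
    intro a ha
    simp only [Set.mem_insert_iff, Set.mem_singleton_iff] at *
    rcases ha with rfl | rfl | rfl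
    · exact Or.inl inv_one
    · exact Or.inr (Or.inr (inv_eq_of_mul_eq_one_right (zsub_e2 hg)))
    · exact Or.inr (Or.inl (inv_eq_of_mul_eq_one_right (zsub_e3 hg)))

theorem mem_zsub (hg : g ^ 3 = 1) {x : G} :
    x ∈ zsub g hg ↔ x = 1 ∨ x = g ∨ x = g ^ 2 := Iff.rfl

theorem zsub_congr {g' : G} (hg : g ^ 3 = 1) (hg' : g' ^ 3 = 1) (h : g = g') :
    zsub g hg = zsub g' hg' := by subst h; rfl

theorem sq_ne_one (hg : g ^ 3 = 1) (h1 : g ≠ 1) : g ^ 2 ≠ 1 := by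
  intro h
  apply h1
  have h3 := hg
  rw [show (3 : ℕ) = 2 + 1 from rfl, pow_succ, h, one_mul] at h3
  exact h3

theorem ne_sq (hg : g ^ 3 = 1) (h1 : g ≠ 1) : g ≠ g ^ 2 := by
  intro h
  apply h1
  have : g * g = g * 1 := by rw [mul_one, ← sq]; exact h.symm
  exact mul_left_cancel this

theorem card_zsub (hg : g ^ 3 = 1) (h1 : g ≠ 1) : Nat.card (zsub g hg) = 3 := by
  have e : Nat.card (zsub g hg) = ({1, g, g ^ 2} : Set G).ncard := by
    rw [← Nat.card_coe_set_eq]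
    exact Nat.card_congr ⟨fun x => ⟨x.1, x.2⟩, fun x => ⟨x.1, x.2⟩, fun _ => rfl, fun _ => rfl⟩
  rw [e, Set.ncard_eq_three]
  exact ⟨1, g, g ^ 2, Ne.symm h1, Ne.symm (sq_ne_one hg h1), ne_sq hg h1, rfl⟩

/-- The homomorphism `Z3 →* G` sending the generator to `g`. -/
def theta (g : G) (hg : g ^ 3 = 1) : Multiplicative (ZMod 3) →* G where
  toFun z := g ^ (Multiplicative.toAdd z).val
  map_one' := by
    show g ^ (0 : ZMod 3).val = 1
    rw [ZMod.val_zero, pow_zero]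
  map_mul' a b := by
    show g ^ ((Multiplicative.toAdd a) + (Multiplicative.toAdd b)).val = _
    rw [ZMod.val_add, pow_mod_three hg, pow_add]

theorem theta_ofAdd_one (hg : g ^ 3 = 1) : theta g hg (Multiplicative.ofAdd 1) = g := by
  show g ^ (1 : ZMod 3).val = g
  rw [show (1 : ZMod 3).val = 1 from rfl, pow_one]

theorem theta_ofAdd_two (hg : g ^ 3 = 1) : theta g hg (Multiplicative.ofAdd 2) = g ^ 2 := by
  show g ^ (2 : ZMod 3).val = g ^ 2
  rw [show (2 : ZMod 3).val = 2 from rfl]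

theorem range_theta (hg : g ^ 3 = 1) : (theta g hg).range = zsub g hg := by
  ext x
  constructor
  · rintro ⟨z, rfl⟩
    show g ^ (Multiplicative.toAdd z).val ∈ zsub g hg
    have hlt : (Multiplicative.toAdd z).val < 3 := ZMod.val_lt _
    set n := (Multiplicative.toAdd z).val with hn
    interval_cases n
    · exact Or.inl (pow_zero g)
    · exact Or.inr (Or.inl (pow_one g))
    · exact Or.inr (Or.inr rfl)
  · intro hx
    rcases hx with h | h | h <;> rw [h]
    exacts [⟨1, map_one _⟩, ⟨Multiplicative.ofAdd 1, theta_ofAdd_one hg⟩,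
      ⟨Multiplicative.ofAdd 2, theta_ofAdd_two hg⟩]

theorem theta_injective (hg : g ^ 3 = 1) (h1 : g ≠ 1) :
    Function.Injective (theta g hg) := by
  intro a b h
  have hval : (Multiplicative.toAdd a).val = (Multiplicative.toAdd b).val := by
    have ha : (Multiplicative.toAdd a).val < 3 := ZMod.val_lt _
    have hb : (Multiplicative.toAdd b).val < 3 := ZMod.val_lt _
    have h' : g ^ (Multiplicative.toAdd a).val = g ^ (Multiplicative.toAdd b).val := h
    set m := (Multiplicative.toAdd a).val
    set n := (Multiplicative.toAdd b).val
    interval_cases m <;> interval_cases n <;>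
      (try simp only [pow_zero, pow_one] at h') <;>
      first
      | rfl
      | exact absurd h' h1
      | exact absurd h'.symm h1
      | exact absurd h' (sq_ne_one hg h1)
      | exact absurd h'.symm (sq_ne_one hg h1)
      | exact absurd h' (ne_sq hg h1)
      | exact absurd h'.symm (ne_sq hg h1)
  have : Multiplicative.toAdd a = Multiplicative.toAdd b := ZMod.val_injective 3 hval
  exact Multiplicative.toAdd.injective this

/-- `zsub g` is isomorphic to `Z3`. -/
noncomputable def zsubEquiv (hg : g ^ 3 = 1) (h1 : g ≠ 1) :
    Multiplicative (ZMod 3) ≃* zsub g hg :=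
  (MonoidHom.ofInjective (theta_injective hg h1)).trans
    (MulEquiv.subgroupCongr (range_theta hg))

theorem zsub_sq (hg : g ^ 3 = 1) (hg2 : (g ^ 2) ^ 3 = 1) :
    zsub (g ^ 2) hg2 = zsub g hg := by
  ext x
  rw [mem_zsub, mem_zsub, sq (g ^ 2), zsub_e4 hg]
  tauto

/-- Any subgroup of order 3 is a `zsub`. -/
theorem subgroup_card_three {K : Subgroup G} (hK : Nat.card K = 3) :
    ∃ (g : G) (hg : g ^ 3 = 1), g ≠ 1 ∧ K = zsub g hg := by
  have hfin : Finite K := Nat.finite_of_card_ne_zero (by omega)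
  have hnt : Nontrivial K := Finite.one_lt_card_iff_nontrivial.mp (by omega)
  obtain ⟨g, hgK, hg1⟩ := K.nontrivial_iff_exists_ne_one.mp hnt
  have hg3 : g ^ 3 = 1 := by
    have h := pow_card_eq_one' (G := K) (x := ⟨g, hgK⟩)
    rw [hK] at h
    exact congrArg Subtype.val h
  refine ⟨g, hg3, hg1, ?_⟩
  have hle : zsub g hg3 ≤ K := by
    rintro x (rfl | rfl | rfl)
    · exact K.one_mem
    · exact hgK
    · rw [sq]; exact K.mul_mem hgK hgK
  exact (Subgroup.eq_of_le_of_card_ge hle (by rw [hK, card_zsub hg3 hg1])).symm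

/-- A nontrivial subgroup contained in one of order 3 equals it. -/
theorem eq_of_le_card_three {K L : Subgroup G} (hle : K ≤ L) (hL : Nat.card L = 3)
    (hK : K ≠ ⊥) : K = L := by
  have hfin : Finite L := Nat.finite_of_card_ne_zero (by omega)
  have hdvd : Nat.card K ∣ 3 := hL ▸ Subgroup.card_dvd_of_le hle
  have h1 : Nat.card K ≠ 1 := fun h => hK (Subgroup.card_eq_one.mp h)
  have h3 : Nat.card K = 3 := by
    rcases (Nat.prime_three).eq_one_or_self_of_dvd _ hdvd with h | h
    · exact absurd h h1
    · exact h
  exact Subgroup.eq_of_le_of_card_ge hle (by omega)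

theorem range_comp_theta {Γ : Type*} [Group Γ] (hg : g ^ 3 = 1) (h1 : g ≠ 1)
    (ψ : Γ →* Multiplicative (ZMod 3)) :
    ((theta g hg).comp ψ).range = zsub g hg ↔ ψ ≠ 1 := by
  constructor
  · intro h hψ
    rw [hψ] at h
    have : ((theta g hg).comp (1 : Γ →* Multiplicative (ZMod 3))) = 1 := by
      ext x; simp
    rw [this, MonoidHom.range_one] at h
    have := card_zsub hg h1
    rw [← h, Subgroup.card_bot] at this
    omega
  · intro hψ
    have hle : ((theta g hg).comp ψ).range ≤ zsub g hg := by
      rintro _ ⟨x, rfl⟩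
      rw [← range_theta hg]
      exact ⟨ψ x, rfl⟩
    refine eq_of_le_card_three hle (card_zsub hg h1) ?_
    intro hbot
    apply hψ
    ext x
    have : (theta g hg) (ψ x) ∈ (⊥ : Subgroup G) := hbot ▸ ⟨x, rfl⟩
    rw [Subgroup.mem_bot] at this
    have := theta_injective hg h1 (this.trans (map_one _).symm)
    simp [this]

end ZThree

/-! ### Concrete `A4` facts -/

/-- The Klein four subgroup of `A4`: elements of order dividing 2. -/
def Vsub : Subgroup A4 where
  carrier := {x | x ^ 2 = 1}
  one_mem' := by decide
  mul_mem' := by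
    intro a b ha hb
    revert a b ha hb
    decide
  inv_mem' := by
    intro a ha
    revert a ha
    decide

theorem mem_Vsub {x : A4} : x ∈ Vsub ↔ x ^ 2 = 1 := Iff.rfl

instance : DecidablePred (· ∈ Vsub) := fun x => decidable_of_iff (x ^ 2 = 1) mem_Vsub.symm

def vgen1 : A4 := ⟨Equiv.swap 0 1 * Equiv.swap 2 3, by
  rw [Equiv.Perm.mem_alternatingGroup]; decide⟩
def vgen2 : A4 := ⟨Equiv.swap 0 2 * Equiv.swap 1 3, by
  rw [Equiv.Perm.mem_alternatingGroup]; decide⟩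

/-- The inclusion `V4 →* A4`. -/
def nu : V4 →* A4 where
  toFun z := vgen1 ^ (Multiplicative.toAdd z).1.val * vgen2 ^ (Multiplicative.toAdd z).2.val
  map_one' := by decide
  map_mul' := by decide

theorem nu_injective : Function.Injective nu := by decide

theorem range_nu : nu.range = Vsub := by
  ext x
  constructor
  · rintro ⟨z, rfl⟩
    show (nu z) ^ 2 = 1
    revert z
    decide
  · intro hx
    have : ∀ x : A4, x ^ 2 = 1 → ∃ z : V4, nu z = x := by decide
    exact this x hx

theorem card_A4 : Nat.card A4 = 12 := by rw [Nat.card_eq_fintype_card]; decide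

theorem card_Vsub : Nat.card Vsub = 4 := by rw [Nat.card_eq_fintype_card]; decide

theorem Vsub_equiv_V4 : Nonempty (Vsub ≃* V4) :=
  ⟨((MonoidHom.ofInjective nu_injective).trans (MulEquiv.subgroupCongr range_nu)).symm⟩

theorem sq_eq_one_V4 : ∀ v : V4, v ^ 2 = 1 := by decide

theorem sq_or_cube_A4 : ∀ x : A4, x ^ 2 = 1 ∨ x ^ 3 = 1 := by decide

theorem card_cubes_A4 : Nat.card {x : A4 // x ^ 3 = 1} = 9 := by
  rw [Nat.card_eq_fintype_card]; decide

theorem central_eq_A4 : ∀ g₁ g₂ : A4, (∀ y, g₁ * y * g₁⁻¹ = g₂ * y * g₂⁻¹) → g₁ = g₂ := by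
  decide

theorem top_not_le_Vsub : ¬ ((⊤ : Subgroup A4) ≤ Vsub) := by
  intro h
  have : ∀ x : A4, x ^ 2 = 1 := fun x => h (Subgroup.mem_top x)
  revert this
  decide

/-- The four generators of the order-3 subgroups of `A4`. -/
def cgens : Fin 4 → A4 :=
  ![⟨Equiv.swap 0 1 * Equiv.swap 1 2, by rw [Equiv.Perm.mem_alternatingGroup]; decide⟩,
    ⟨Equiv.swap 0 1 * Equiv.swap 1 3, by rw [Equiv.Perm.mem_alternatingGroup]; decide⟩,
    ⟨Equiv.swap 0 2 * Equiv.swap 2 3, by rw [Equiv.Perm.mem_alternatingGroup]; decide⟩,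
    ⟨Equiv.swap 1 2 * Equiv.swap 2 3, by rw [Equiv.Perm.mem_alternatingGroup]; decide⟩]

theorem cgens_cube : ∀ i : Fin 4, cgens i ^ 3 = 1 := by decide

theorem cgens_ne_one : ∀ i : Fin 4, cgens i ≠ 1 := by decide

theorem cgens_exists : ∀ x : A4, x ^ 3 = 1 → x ≠ 1 →
    ∃ i : Fin 4, (x = cgens i ∨ x = cgens i ^ 2) := by decide

theorem cgens_uniq : ∀ (x : A4) (i j : Fin 4), (x = cgens i ∨ x = cgens i ^ 2) →
    (x = cgens j ∨ x = cgens j ^ 2) → i = j := by decide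

/-- Subgroup classification for `A4`. -/
theorem A4_subgroup_classification (K : Subgroup A4) :
    K ≤ Vsub ∨ Nat.card K = 3 ∨ K = ⊤ := by
  have hdvd : Nat.card K ∣ 12 := card_A4 ▸ Subgroup.card_subgroup_dvd_card K
  have hpow : ∀ x ∈ K, x ^ (Nat.card K) = 1 := by
    intro x hx
    have h := pow_card_eq_one' (G := K) (x := ⟨x, hx⟩)
    exact congrArg Subtype.val h
  have hsmall : Nat.card K = 1 ∨ Nat.card K = 2 ∨ Nat.card K = 4 → K ≤ Vsub := by
    intro hcases x hx
    rcases sq_or_cube_A4 x with h2 | h3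
    · exact h2
    · have hxn : x ^ (Nat.card K) = 1 := hpow x hx
      have hdvd3 : orderOf x ∣ 3 := orderOf_dvd_of_pow_eq_one h3
      have hdvdn : orderOf x ∣ Nat.card K := orderOf_dvd_of_pow_eq_one hxn
      have hx1 : x = 1 := by
        rcases hcases with h | h | h <;> rw [h] at hdvdn <;>
          · have := Nat.dvd_gcd hdvd3 hdvdn
            norm_num at this
            exact this
      rw [mem_Vsub, hx1, one_pow]
  have hmem : Nat.card K ∈ ({1, 2, 3, 4, 6, 12} : Finset ℕ) := by
    have h12 : (Nat.divisors 12) = ({1, 2, 3, 4, 6, 12} : Finset ℕ) := by decide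
    rw [← h12]
    exact Nat.mem_divisors.mpr ⟨hdvd, by norm_num⟩
  simp only [Finset.mem_insert, Finset.mem_singleton] at hmem
  rcases hmem with h | h | h | h | h | h
  · exact Or.inl (hsmall (Or.inl h))
  · exact Or.inl (hsmall (Or.inr (Or.inl h)))
  · exact Or.inr (Or.inl h)
  · exact Or.inl (hsmall (Or.inr (Or.inr h)))
  · exfalso
    have hidx : K.index = 2 := by
      have := Subgroup.index_mul_card K
      rw [h, card_A4] at this
      omega
    have hsq : ∀ a : A4, a ^ 2 ∈ K := Subgroup.sq_mem_of_index_two hidx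
    have hsub : ∀ x : A4, x ^ 3 = 1 → x ∈ K := by
      intro x hx3
      have h4 : (x ^ 2) ^ 2 = x := by
        have : (x ^ 2) ^ 2 = x ^ 3 * x := by group
        rw [this, hx3, one_mul]
      have := hsq (x ^ 2)
      rwa [h4] at this
    have hinj : Function.Injective
        (fun x : {x : A4 // x ^ 3 = 1} => (⟨x.1, hsub x.1 x.2⟩ : K)) := by
      intro a b hab
      have h1 : ((⟨a.1, hsub a.1 a.2⟩ : K) : A4) = ((⟨b.1, hsub b.1 b.2⟩ : K) : A4) :=
        congrArg Subtype.val hab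
      exact Subtype.ext h1
    have hle := Nat.card_le_card_of_injective _ hinj
    rw [card_cubes_A4, h] at hle
    omega
  · refine Or.inr (Or.inr (Subgroup.eq_top_of_card_eq K ?_))
    rw [h, card_A4]

/-! ### Conjugation invariance -/

section Conj
variable {Γ : Type*} [Group Γ]

/-- Conjugation of a homomorphism. -/
def conjHom (g : A4) (φ : Γ →* A4) : Γ →* A4 := ((MulAut.conj g).toMonoidHom).comp φ

theorem conjHom_apply (g : A4) (φ : Γ →* A4) (x : Γ) :
    conjHom g φ x = g * φ x * g⁻¹ := rfl

theorem rel_iff {φ ψ : Γ →* A4} :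
    (homConj Γ A4).r φ ψ ↔ ∃ g : A4, ∀ x, ψ x = g * φ x * g⁻¹ := Iff.rfl

theorem rel_range {φ ψ : Γ →* A4} (h : (homConj Γ A4).r φ ψ) :
    ∃ g : A4, ψ.range = φ.range.map (MulAut.conj g).toMonoidHom := by
  obtain ⟨g, hg⟩ := h
  refine ⟨g, ?_⟩
  have : ψ = conjHom g φ := MonoidHom.ext (fun x => hg x)
  rw [this]
  exact MonoidHom.range_comp _ _

theorem inv_P1 (φ ψ : Γ →* A4) (h : (homConj Γ A4).r φ ψ) :
    φ.range ≤ Vsub → ψ.range ≤ Vsub := by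
  obtain ⟨g, hg⟩ := h
  intro h1
  rintro _ ⟨x, rfl⟩
  rw [hg x, mem_Vsub]
  have hv : (φ x) ^ 2 = 1 := mem_Vsub.mp (h1 ⟨x, rfl⟩)
  have : (g * φ x * g⁻¹) ^ 2 = g * (φ x) ^ 2 * g⁻¹ := by
    simp [sq, mul_assoc]
  rw [this, hv, mul_one, mul_inv_cancel]

theorem inv_P2 (φ ψ : Γ →* A4) (h : (homConj Γ A4).r φ ψ) :
    Nat.card φ.range = 3 → Nat.card ψ.range = 3 := by
  obtain ⟨g, hrange⟩ := rel_range h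
  intro h3
  rw [hrange, ← h3]
  exact (Nat.card_congr
    (Subgroup.equivMapOfInjective φ.range _ (MulAut.conj g).injective).toEquiv).symm

theorem inv_PS (φ ψ : Γ →* A4) (h : (homConj Γ A4).r φ ψ) :
    Function.Surjective φ → Function.Surjective ψ := by
  obtain ⟨g, hg⟩ := h
  intro hs y
  obtain ⟨x, hx⟩ := hs (g⁻¹ * y * g)
  refine ⟨x, ?_⟩
  rw [hg x, hx]
  group

end Conj


/-! ### Counting lemmas -/

section Counting
variable (Γ : Type*) [Group Γ]

noncomputable def NV : ℕ := Nat.card (Quotient ((homConj Γ A4).comap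
  (Subtype.val : {φ : Γ →* A4 // φ.range ≤ Vsub} → (Γ →* A4))))

noncomputable def NZ : ℕ := Nat.card (Quotient ((homConj Γ A4).comap
  (Subtype.val : {φ : Γ →* A4 // Nat.card φ.range = 3} → (Γ →* A4))))

noncomputable def NS : ℕ := Nat.card (Quotient ((homConj Γ A4).comap
  (Subtype.val : {φ : Γ →* A4 // Function.Surjective φ} → (Γ →* A4))))

variable {Γ}

theorem d12 (φ : Γ →* A4) : φ.range ≤ Vsub → Nat.card φ.range = 3 → False := by
  intro h1 h2
  have := Subgroup.card_dvd_of_le h1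
  rw [h2, card_Vsub] at this
  norm_num at this

theorem dS_range {φ : Γ →* A4} (hs : Function.Surjective φ) : φ.range = ⊤ :=
  MonoidHom.range_eq_top.mpr hs

theorem d1S (φ : Γ →* A4) : φ.range ≤ Vsub → Function.Surjective φ → False := by
  intro h1 hs
  rw [dS_range hs] at h1
  exact top_not_le_Vsub h1

theorem d2S (φ : Γ →* A4) : Nat.card φ.range = 3 → Function.Surjective φ → False := by
  intro h2 hs
  rw [dS_range hs, Subgroup.card_top, card_A4] at h2
  omega

theorem d2triv (φ : Γ →* A4) : Nat.card φ.range = 3 → φ = 1 → False := by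
  rintro h2 rfl
  rw [MonoidHom.range_one, Subgroup.card_bot] at h2
  omega

theorem exhaustive (φ : Γ →* A4) :
    φ.range ≤ Vsub ∨ Nat.card φ.range = 3 ∨ Function.Surjective φ := by
  rcases A4_subgroup_classification φ.range with h | h | h
  · exact Or.inl h
  · exact Or.inr (Or.inl h)
  · exact Or.inr (Or.inr (MonoidHom.range_eq_top.mp h))

variable (Γ)

theorem ks_eq (h : Finite (Γ →* A4)) : ks A4 Γ = NV Γ + NZ Γ + NS Γ := by
  have e12 : Quotient (homConj Γ A4) ≃ Quotient ((homConj Γ A4).comap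
      (Subtype.val : {φ : Γ →* A4 // φ.range ≤ Vsub ∨
        (Nat.card φ.range = 3 ∨ Function.Surjective φ)} → (Γ →* A4))) :=
    (quotRestrictTrue _).trans (quotRestrictCongr _
      (fun φ => ⟨fun _ => exhaustive φ, fun _ => trivial⟩))
  have e3 := quotRestrictSplit (homConj Γ A4)
    (fun φ : Γ →* A4 => φ.range ≤ Vsub)
    (fun φ => Nat.card φ.range = 3 ∨ Function.Surjective φ)
    inv_P1
    (fun φ h1 h2 => h2.elim (d12 φ h1) (d1S φ h1))
  have e4 := quotRestrictSplit (homConj Γ A4)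
    (fun φ : Γ →* A4 => Nat.card φ.range = 3)
    (fun φ => Function.Surjective φ)
    inv_P2 d2S
  show Nat.card (Quotient (homConj Γ A4)) = _
  rw [Nat.card_congr (e12.trans e3), Nat.card_sum, Nat.card_congr e4, Nat.card_sum]
  show NV Γ + (NZ Γ + NS Γ) = NV Γ + NZ Γ + NS Γ
  omega

theorem ksSubV4_eq : ksSub A4 V4 Γ = NV Γ := by
  refine Nat.card_congr (quotRestrictCongr _ (fun φ => ⟨?_, ?_⟩))
  · rintro ⟨K, ⟨e⟩, hle⟩
    refine le_trans hle ?_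
    intro x hx
    rw [mem_Vsub]
    have h2 : ((⟨x, hx⟩ : K) ^ 2) = 1 := by
      apply e.injective
      rw [map_pow, map_one]
      exact sq_eq_one_V4 _
    have := congrArg Subtype.val h2
    simpa using this
  · intro h
    exact ⟨Vsub, Vsub_equiv_V4, h⟩

theorem ksSubZ3_eq (h : Finite (Γ →* A4)) : ksSub A4 Z3 Γ = NZ Γ + 1 := by
  have cardZ3 : Nat.card Z3 = 3 := by rw [Nat.card_eq_fintype_card]; decide
  have hiff : ∀ φ : Γ →* A4,
      (∃ K : Subgroup A4, Nonempty (K ≃* Z3) ∧ φ.range ≤ K) ↔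
        (Nat.card φ.range = 3 ∨ φ = 1) := by
    intro φ
    constructor
    · rintro ⟨K, ⟨e⟩, hle⟩
      have hK : Nat.card K = 3 := by rw [Nat.card_congr e.toEquiv, cardZ3]
      have hdvd : Nat.card φ.range ∣ 3 := hK ▸ Subgroup.card_dvd_of_le hle
      rcases (Nat.prime_three).eq_one_or_self_of_dvd _ hdvd with h1 | h3
      · exact Or.inr (range_eq_bot_iff.mp (Subgroup.card_eq_one.mp h1))
      · exact Or.inl h3
    · rintro (h3 | rfl)
      · obtain ⟨g, hg, h1, heq⟩ := subgroup_card_three h3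
        exact ⟨φ.range,
          ⟨(MulEquiv.subgroupCongr heq).trans (zsubEquiv hg h1).symm⟩, le_refl _⟩
      · refine ⟨zsub (cgens 0) (cgens_cube 0),
          ⟨(zsubEquiv (cgens_cube 0) (cgens_ne_one 0)).symm⟩, ?_⟩
        rw [MonoidHom.range_one]
        exact bot_le
  have esplit := quotRestrictSplit (homConj Γ A4)
    (fun φ : Γ →* A4 => Nat.card φ.range = 3)
    (fun φ => φ = 1)
    inv_P2 d2triv
  have htriv : Nat.card (Quotient ((homConj Γ A4).comap
      (Subtype.val : {φ : Γ →* A4 // φ = 1} → (Γ →* A4)))) = 1 := by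
    haveI : Subsingleton {φ : Γ →* A4 // φ = 1} :=
      ⟨fun a b => Subtype.ext (a.2.trans b.2.symm)⟩
    haveI : Subsingleton (Quotient ((homConj Γ A4).comap
        (Subtype.val : {φ : Γ →* A4 // φ = 1} → (Γ →* A4)))) := by
      constructor
      intro a b
      induction a using Quotient.ind with | _ x => ?_
      induction b using Quotient.ind with | _ y => ?_
      exact congrArg _ (Subsingleton.elim x y)
    haveI : Inhabited (Quotient ((homConj Γ A4).comap
        (Subtype.val : {φ : Γ →* A4 // φ = 1} → (Γ →* A4)))) :=
      ⟨Quotient.mk _ ⟨1, rfl⟩⟩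
    exact Nat.card_unique
  show Nat.card _ = _
  rw [Nat.card_congr ((quotRestrictCongr _ hiff).trans esplit), Nat.card_sum, htriv]
  rfl

theorem cardV_eq : Nat.card (Γ →* V4) = Nat.card {φ : Γ →* A4 // φ.range ≤ Vsub} :=
  Nat.card_congr ((homEquivRange nu nu_injective).trans
    (Equiv.subtypeEquivRight (fun φ => by rw [range_nu])))

theorem card_ne_one (hZ : Finite (Γ →* Z3)) :
    Nat.card {ψ : Γ →* Z3 // ψ ≠ 1} = Nat.card (Γ →* Z3) - 1 := by
  classical
  have e : (Γ →* Z3) ≃ {ψ : Γ →* Z3 // ψ = 1} ⊕ {ψ : Γ →* Z3 // ψ ≠ 1} :=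
    (Equiv.sumCompl _).symm
  have hsum : Nat.card (Γ →* Z3) =
      Nat.card {ψ : Γ →* Z3 // ψ = 1} + Nat.card {ψ : Γ →* Z3 // ψ ≠ 1} := by
    rw [← Nat.card_sum]
    exact Nat.card_congr e
  haveI : Unique {ψ : Γ →* Z3 // ψ = 1} :=
    ⟨⟨⟨1, rfl⟩⟩, fun a => Subtype.ext a.2⟩
  have h1 : Nat.card {ψ : Γ →* Z3 // ψ = 1} = 1 := Nat.card_unique
  rw [h1] at hsum
  omega

theorem cardP2_eq (hZ : Finite (Γ →* Z3)) :
    Nat.card {φ : Γ →* A4 // Nat.card φ.range = 3} =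
      4 * (Nat.card (Γ →* Z3) - 1) := by
  classical
  let F : (Σ _i : Fin 4, {ψ : Γ →* Z3 // ψ ≠ 1}) →
      {φ : Γ →* A4 // Nat.card φ.range = 3} := fun p =>
    ⟨(theta (cgens p.1) (cgens_cube p.1)).comp p.2.1, by
      rw [(range_comp_theta (cgens_cube p.1) (cgens_ne_one p.1) p.2.1).mpr p.2.2]
      exact card_zsub _ (cgens_ne_one _)⟩
  have hFinj : Function.Injective F := by
    rintro ⟨i, ψ, hψ⟩ ⟨j, χ, hχ⟩ h
    have hval : (theta (cgens i) (cgens_cube i)).comp ψ =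
        (theta (cgens j) (cgens_cube j)).comp χ := congrArg Subtype.val h
    have hri := (range_comp_theta (cgens_cube i) (cgens_ne_one i) ψ).mpr hψ
    have hrj := (range_comp_theta (cgens_cube j) (cgens_ne_one j) χ).mpr hχ
    have hij : i = j := by
      apply cgens_uniq (cgens i) i j (Or.inl rfl)
      have hmem : cgens i ∈ zsub (cgens j) (cgens_cube j) := by
        rw [← hrj, ← hval, hri]
        exact Or.inr (Or.inl rfl)
      rcases (mem_zsub _).mp hmem with h1 | h1 | h1
      · exact absurd h1 (cgens_ne_one i)
      · exact Or.inl h1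
      · exact Or.inr h1
    subst hij
    have hcomp : ∀ x, (theta (cgens i) (cgens_cube i)) (ψ x) =
        (theta (cgens i) (cgens_cube i)) (χ x) := fun x => DFunLike.congr_fun hval x
    have : ψ = χ := MonoidHom.ext fun x =>
      theta_injective (cgens_cube i) (cgens_ne_one i) (hcomp x)
    subst this
    rfl
  have hFsurj : Function.Surjective F := by
    rintro ⟨φ, hφ⟩
    obtain ⟨g, hg, h1, heq⟩ := subgroup_card_three hφ
    obtain ⟨i, hi⟩ := cgens_exists g hg h1
    have hzeq : zsub g hg = zsub (cgens i) (cgens_cube i) := by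
      rcases hi with h | h
      · exact zsub_congr hg (cgens_cube i) h
      · subst h
        exact zsub_sq (cgens_cube i) hg
    have hle : φ.range ≤ (theta (cgens i) (cgens_cube i)).range := by
      rw [range_theta, ← hzeq, ← heq]
    obtain ⟨ψ, hψ⟩ := (homEquivRange (theta (cgens i) (cgens_cube i))
      (theta_injective (cgens_cube i) (cgens_ne_one i))).surjective ⟨φ, hle⟩
    have hψval : (theta (cgens i) (cgens_cube i)).comp ψ = φ := congrArg Subtype.val hψ
    have hψne : ψ ≠ 1 := by
      apply (range_comp_theta (cgens_cube i) (cgens_ne_one i) ψ).mp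
      rw [hψval, heq, hzeq]
    exact ⟨⟨i, ψ, hψne⟩, Subtype.ext hψval⟩
  calc Nat.card {φ : Γ →* A4 // Nat.card φ.range = 3}
      = Nat.card (Σ _i : Fin 4, {ψ : Γ →* Z3 // ψ ≠ 1}) :=
        (Nat.card_congr (Equiv.ofBijective F ⟨hFinj, hFsurj⟩)).symm
    _ = Nat.card (Fin 4 × {ψ : Γ →* Z3 // ψ ≠ 1}) :=
        Nat.card_congr (Equiv.sigmaEquivProd _ _)
    _ = 4 * Nat.card {ψ : Γ →* Z3 // ψ ≠ 1} := by
        rw [Nat.card_prod, Nat.card_eq_fintype_card (α := Fin 4), Fintype.card_fin]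
    _ = 4 * (Nat.card (Γ →* Z3) - 1) := by rw [card_ne_one Γ hZ]

theorem cardS_eq (h : Finite (Γ →* A4)) :
    Nat.card {φ : Γ →* A4 // Function.Surjective φ} = 12 * NS Γ := by
  classical
  set sS := (homConj Γ A4).comap
    (Subtype.val : {φ : Γ →* A4 // Function.Surjective φ} → (Γ →* A4)) with hsS
  let F : Quotient sS × A4 → {φ : Γ →* A4 // Function.Surjective φ} := fun p =>
    ⟨conjHom p.2 p.1.out.1, inv_PS p.1.out.1 _ ⟨p.2, fun x => rfl⟩ p.1.out.2⟩
  have hFsurj : Function.Surjective F := by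
    rintro ⟨φ, hφ⟩
    obtain ⟨g, hg⟩ := Quotient.mk_out (s := sS) (⟨φ, hφ⟩ : {φ : Γ →* A4 // Function.Surjective φ})
    exact ⟨(Quotient.mk sS ⟨φ, hφ⟩, g), Subtype.ext (MonoidHom.ext fun t => (hg t).symm)⟩
  have hFinj : Function.Injective F := by
    rintro ⟨q1, g1⟩ ⟨q2, g2⟩ h
    have hval : conjHom g1 q1.out.1 = conjHom g2 q2.out.1 := congrArg Subtype.val h
    have hrel12 : sS.r q1.out q2.out := by
      refine ⟨g2⁻¹ * g1, fun x => ?_⟩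
      have hx : g1 * q1.out.1 x * g1⁻¹ = g2 * q2.out.1 x * g2⁻¹ :=
        DFunLike.congr_fun hval x
      have h2 : q2.out.1 x = g2⁻¹ * (g2 * q2.out.1 x * g2⁻¹) * g2 := by group
      rw [h2, ← hx]
      group
    have hq : q1 = q2 := by
      rw [← Quotient.out_eq q1, ← Quotient.out_eq q2]
      exact Quotient.sound hrel12
    subst hq
    have hg : g1 = g2 := by
      apply central_eq_A4
      intro y
      obtain ⟨x, rfl⟩ := q1.out.2 y
      exact DFunLike.congr_fun hval x
    rw [hg]
  have := Nat.card_congr (Equiv.ofBijective F ⟨hFinj, hFsurj⟩)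
  rw [Nat.card_prod, card_A4] at this
  rw [← this]
  show NS Γ * 12 = 12 * NS Γ
  omega

theorem W_eq (h : Finite (Γ →* A4)) :
    Nat.card (Γ →* A4) = Nat.card {φ : Γ →* A4 // φ.range ≤ Vsub} +
      Nat.card {φ : Γ →* A4 // Nat.card φ.range = 3} +
      Nat.card {φ : Γ →* A4 // Function.Surjective φ} := by
  classical
  have e0 : (Γ →* A4) ≃ {φ : Γ →* A4 // φ.range ≤ Vsub ∨
      (Nat.card φ.range = 3 ∨ Function.Surjective φ)} :=
    (Equiv.subtypeUnivEquiv exhaustive).symm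
  have e1 := subtypeOrSplit (fun φ : Γ →* A4 => φ.range ≤ Vsub)
    (fun φ => Nat.card φ.range = 3 ∨ Function.Surjective φ)
    (fun φ h1 h2 => h2.elim (d12 φ h1) (d1S φ h1))
  have e2 := subtypeOrSplit (fun φ : Γ →* A4 => Nat.card φ.range = 3)
    (fun φ => Function.Surjective φ) d2S
  rw [Nat.card_congr (e0.trans e1), Nat.card_sum, Nat.card_congr e2, Nat.card_sum]
  conv_rhs => rw [add_assoc]

end Counting

theorem statement_1 (Γ : Type*) [Group Γ] (hΓ : Group.FG Γ) :
    (ks A4 Γ : ℚ) = (ksSub A4 V4 Γ : ℚ) + (ksSub A4 Z3 Γ : ℚ) - 1 +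
      ((ksw A4 Γ : ℚ) - 4 * ((Nat.card (Γ →* Z3) : ℚ) - 1) - (Nat.card (Γ →* V4) : ℚ)) / 12 := by
  haveI hA : Finite (Γ →* A4) := finite_monoidHom _ _ hΓ
  haveI hZ : Finite (Γ →* Z3) := finite_monoidHom _ _ hΓ
  haveI hV : Finite (Γ →* V4) := finite_monoidHom _ _ hΓ
  have hT : 1 ≤ Nat.card (Γ →* Z3) := Nat.card_pos
  have h1 := ks_eq Γ hA
  have h2 := ksSubV4_eq Γ
  have h3 := ksSubZ3_eq Γ hA
  have h4 := cardV_eq Γ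
  have h5 := cardP2_eq Γ hZ
  have h6 := cardS_eq Γ hA
  have h7 := W_eq Γ hA
  have hW : ksw A4 Γ = Nat.card (Γ →* A4) := rfl
  rw [h1, h2, h3, hW, h7, h4, h5, h6]
  push_cast [Nat.cast_sub hT]
  ring
end

section
/- Let G be a finite group and H an abelian subgroup of G with |H| ≥ 2 such that (i) every subgroup of G isomorphic to H is conjugate to H, and (ii) for every nontrivial element h of H, the centralizer of h in G equals H. Let n_H be the number of conjugacy classes of G that contain an element of H. Then for every g ≥ 1: the number of homomorphisms from ℤ^g to H equals |H|^g, and the number of conjugacy classes of homomorphisms from ℤ^g to G whose image is contained in some subgroup of G isomorphic to H equals (n_H − 1)·(|H|^g − |H|)/(|H| − 1) + n_H. -/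
open MulAction

/-- The `i`-th standard generator of `Zg g`. -/
def zgen (g : ℕ) (i : Fin g) : Zg g := Multiplicative.ofAdd (Pi.single i 1)

lemma zgen_zpow {g : ℕ} (i : Fin g) (k : ℤ) :
    zgen g i ^ k = Multiplicative.ofAdd (Pi.single i k) := by
  have : (Pi.single i k : Fin g → ℤ) = k • Pi.single i (1 : ℤ) := by
    simp [← Pi.single_smul, smul_eq_mul]
  rw [this, ofAdd_zsmul]
  rfl

lemma zgen_closure (g : ℕ) : Subgroup.closure (Set.range (zgen g)) = ⊤ := by
  rw [eq_top_iff]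
  intro x _
  have key : ∀ (s : Finset (Fin g)) (a : Fin g → ℤ),
      Multiplicative.ofAdd (∑ i ∈ s, Pi.single i (a i)) ∈
        Subgroup.closure (Set.range (zgen g)) := by
    intro s
    induction s using Finset.induction with
    | empty => intro a; simpa using Subgroup.one_mem _
    | @insert j s hj ih =>
      intro a
      rw [Finset.sum_insert hj, ofAdd_add]
      exact Subgroup.mul_mem _
        (by rw [← zgen_zpow]; exact Subgroup.zpow_mem _ (Subgroup.subset_closure (Set.mem_range_self j)) _)
        (ih a)
  have hx : x = Multiplicative.ofAdd (∑ i : Fin g, Pi.single i (x.toAdd i)) := by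
    rw [Finset.univ_sum_single]; rfl
  rw [hx]; exact key Finset.univ _

lemma zg_hom_ext {g : ℕ} {M : Type*} [Monoid M] {φ ψ : Zg g →* M}
    (h : ∀ i, φ (zgen g i) = ψ (zgen g i)) : φ = ψ :=
  MonoidHom.eq_of_eqOn_dense (zgen_closure g) (by rintro x ⟨i, rfl⟩; exact h i)

instance finiteZgHom {G : Type*} [Group G] [Finite G] (g : ℕ) : Finite (Zg g →* G) :=
  Finite.of_injective (fun φ (i : Fin g) => φ (zgen g i))
    (fun _ _ h => zg_hom_ext (fun i => congrFun h i))

noncomputable def zgHomEquiv (g : ℕ) (M : Type*) [CommGroup M] :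
    (Zg g →* M) ≃ (Fin g → M) where
  toFun φ i := φ (zgen g i)
  invFun v :=
    { toFun := fun x => ∏ i, v i ^ (x.toAdd i)
      map_one' := by simp
      map_mul' := fun x y => by
        have h : ∀ i, v i ^ ((x * y).toAdd i) = v i ^ (x.toAdd i) * v i ^ (y.toAdd i) :=
          fun i => by rw [← zpow_add]; rfl
        simp only [h, Finset.prod_mul_distrib] }
  left_inv φ := by
    apply zg_hom_ext
    intro i
    simp only [MonoidHom.coe_mk, OneHom.coe_mk]
    rw [Finset.prod_eq_single i (fun j _ hj => by
        simp [zgen, Pi.single_eq_of_ne hj]) (by simp)]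
    simp [zgen]
  right_inv v := by
    funext i
    simp only [MonoidHom.coe_mk, OneHom.coe_mk]
    rw [Finset.prod_eq_single i (fun j _ hj => by
        simp [zgen, Pi.single_eq_of_ne hj]) (by simp)]
    simp [zgen]

lemma card_zgHom (g : ℕ) (M : Type*) [CommGroup M] :
    Nat.card (Zg g →* M) = Nat.card M ^ g := by
  rw [Nat.card_congr (zgHomEquiv g M), Nat.card_fun]
  simp

lemma orbit_count {N X : Type*} [Group N] [Finite N] [MulAction N X] [Finite X] {k : ℕ}
    (hs : ∀ x : X, Nat.card (stabilizer N x) = k) :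
    Nat.card (orbitRel.Quotient N X) * Nat.card N = Nat.card X * k := by
  classical
  cases nonempty_fintype N
  cases nonempty_fintype X
  have h1 : Nat.card X = ∑ ω : orbitRel.Quotient N X, Nat.card (orbit N ω.out) := by
    rw [Nat.card_congr (selfEquivSigmaOrbits N X), Nat.card_eq_fintype_card, Fintype.card_sigma]
    simp [Nat.card_eq_fintype_card]
  have h2 : ∀ ω : orbitRel.Quotient N X,
      Nat.card (orbit N ω.out) * k = Nat.card N := by
    intro ω
    rw [← hs ω.out]
    simpa [Nat.card_eq_fintype_card] using
      card_orbit_mul_card_stabilizer_eq_card_group N ω.out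
  rw [h1, Finset.sum_mul]
  simp only [h2]
  rw [Finset.sum_const, smul_eq_mul, Finset.card_univ, Nat.card_eq_fintype_card]

section
variable {G : Type*} [Group G] (H : Subgroup G)

/-- nontrivial homs with range in `H`, as an `H.normalizer`-set. -/
abbrev TT (g : ℕ) : Type _ := {φ : Zg g →* G // φ ≠ 1 ∧ φ.range ≤ H}

/-- nontrivial elements of `H`, as an `H.normalizer`-set. -/
abbrev UU : Type _ := {x : G // x ≠ 1 ∧ x ∈ H}

instance TT.smul (g : ℕ) : SMul (Subgroup.normalizer (H : Set G)) (TT H g) :=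
  ⟨fun n φ => ⟨(MulAut.conj (n : G)).toMonoidHom.comp φ.val, by
      intro hc
      apply φ.2.1
      refine MonoidHom.ext fun x => ?_
      have := DFunLike.congr_fun hc x
      simp only [MonoidHom.comp_apply, MulEquiv.coe_toMonoidHom, MulAut.conj_apply,
        MonoidHom.one_apply] at this ⊢
      have := congrArg (fun y => (n : G)⁻¹ * y * (n : G)) this
      simpa [mul_assoc] using this,
    by
      rintro x ⟨y, rfl⟩
      simp only [MonoidHom.comp_apply, MulEquiv.coe_toMonoidHom, MulAut.conj_apply]
      exact (Subgroup.mem_normalizer_iff.mp n.2 _).mp (φ.2.2 ⟨y, rfl⟩)⟩⟩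

lemma smul_TT_val {g : ℕ} (n : (Subgroup.normalizer (H : Set G))) (t : TT H g) (x : Zg g) :
    (n • t).val x = (n : G) * t.val x * (n : G)⁻¹ := rfl

instance TT.mulAction (g : ℕ) : MulAction (Subgroup.normalizer (H : Set G)) (TT H g) where
  one_smul φ := by
    apply Subtype.ext
    refine MonoidHom.ext fun x => ?_
    rw [smul_TT_val]
    simp
  mul_smul a b φ := by
    apply Subtype.ext
    refine MonoidHom.ext fun x => ?_
    rw [smul_TT_val, smul_TT_val, smul_TT_val]
    simp [mul_assoc]

instance UU.smul : SMul (Subgroup.normalizer (H : Set G)) (UU H) :=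
  ⟨fun n u => ⟨(n : G) * u.val * (n : G)⁻¹, by
      simp only [ne_eq, mul_eq_one_iff_eq_inv]
      intro hc
      exact u.2.1 (by
        have : u.val = (n:G)⁻¹ * (n:G) := by
          nth_rewrite 1 [show u.val = (n:G)⁻¹ * ((n:G) * u.val * (n:G)⁻¹) * (n:G) by group]
          rw [hc]; group
        simpa using this),
    (Subgroup.mem_normalizer_iff.mp n.2 _).mp u.2.2⟩⟩

lemma smul_UU_val (n : (Subgroup.normalizer (H : Set G))) (u : UU H) :
    (n • u).val = (n : G) * u.val * (n : G)⁻¹ := rfl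

instance UU.mulAction : MulAction (Subgroup.normalizer (H : Set G)) (UU H) where
  one_smul u := by apply Subtype.ext; rw [smul_UU_val]; simp
  mul_smul a b u := by apply Subtype.ext; rw [smul_UU_val, smul_UU_val, smul_UU_val]; simp [mul_assoc]


lemma comm_of_mem (hab : IsMulCommutative H) {a b : G} (ha : a ∈ H) (hb : b ∈ H) :
    a * b = b * a := by
  have := hab.is_comm.comm (⟨a, ha⟩ : H) (⟨b, hb⟩ : H)
  exact congrArg Subtype.val this

lemma mem_normalizer_of_conj_mem (hab : IsMulCommutative H)
    (hcent : ∀ h : G, h ∈ H → h ≠ 1 → Subgroup.centralizer {h} = H)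
    {h c : G} (hh : h ∈ H) (h1 : h ≠ 1) (hc : c * h * c⁻¹ ∈ H) : c ∈ (Subgroup.normalizer (H : Set G)) := by
  have h1' : c * h * c⁻¹ ≠ 1 := by
    intro hcc
    apply h1
    have := congrArg (fun y => c⁻¹ * y * c) hcc
    simpa [mul_assoc] using this
  have hcH' := hcent _ hc h1'
  have hcH := hcent _ hh h1
  rw [Subgroup.mem_normalizer_iff]
  intro x
  constructor
  · intro hx
    rw [← hcH']
    rw [Subgroup.mem_centralizer_iff]
    rintro y (rfl : y = c * h * c⁻¹)
    have hxh : h * x = x * h := comm_of_mem H hab hh hx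
    calc c * h * c⁻¹ * (c * x * c⁻¹) = c * (h * x) * c⁻¹ := by group
    _ = c * (x * h) * c⁻¹ := by rw [hxh]
    _ = (c * x * c⁻¹) * (c * h * c⁻¹) := by group
  · intro hx
    rw [← hcH']  at hx
    rw [Subgroup.mem_centralizer_iff] at hx
    have := hx _ rfl
    have hxh : h * x = x * h := by
      have := congrArg (fun y => c⁻¹ * y * c) this
      simpa [mul_assoc] using this
    rw [← hcH, Subgroup.mem_centralizer_iff]
    rintro y (rfl : y = h)
    exact hxh

end
section
variable {G : Type*} [Group G] (H : Subgroup G)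

lemma hom_exists_ne_one {g : ℕ} {φ : Zg g →* G} (hφ : φ ≠ 1) : ∃ x, φ x ≠ 1 := by
  by_contra hc
  push_neg at hc
  exact hφ (MonoidHom.ext fun x => hc x)

lemma stabTT_card (hab : IsMulCommutative H)
    (hcent : ∀ h : G, h ∈ H → h ≠ 1 → Subgroup.centralizer {h} = H)
    {g : ℕ} (t : TT H g) :
    Nat.card (stabilizer (Subgroup.normalizer (H : Set G)) t) = Nat.card H := by
  obtain ⟨x₀, hx₀⟩ := hom_exists_ne_one t.2.1
  have hx₀H : t.val x₀ ∈ H := t.2.2 ⟨x₀, rfl⟩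
  refine Nat.card_congr ⟨fun s => ⟨((s : (Subgroup.normalizer (H : Set G))) : G), ?_⟩, fun h =>
    ⟨⟨h.val, Subgroup.le_normalizer h.2⟩, ?_⟩, fun s => by ext; rfl, fun h => rfl⟩
  · -- s ∈ stabilizer implies membership in H
    obtain ⟨⟨n, hn⟩, hs⟩ := s
    have heq : (⟨n, hn⟩ : (Subgroup.normalizer (H : Set G))) • t = t := hs
    have this := congrArg (fun ψ : TT H g => ψ.val x₀) heq
    rw [smul_TT_val] at this
    show n ∈ H
    rw [← hcent _ hx₀H hx₀, Subgroup.mem_centralizer_iff]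
    rintro y (rfl : y = t.val x₀)
    dsimp
    have := congrArg (fun y => y * n) this
    simpa [mul_assoc] using this.symm
  · -- elements of H stabilize
    rw [mem_stabilizer_iff]
    apply Subtype.ext
    refine MonoidHom.ext fun x => ?_
    rw [smul_TT_val]
    have hcomm := comm_of_mem H hab h.2 (t.2.2 ⟨x, rfl⟩)
    rw [hcomm]
    group

lemma stabUU_card (hab : IsMulCommutative H)
    (hcent : ∀ h : G, h ∈ H → h ≠ 1 → Subgroup.centralizer {h} = H)
    (u : UU H) :
    Nat.card (stabilizer (Subgroup.normalizer (H : Set G)) u) = Nat.card H := by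
  refine Nat.card_congr ⟨fun s => ⟨((s : (Subgroup.normalizer (H : Set G))) : G), ?_⟩, fun h =>
    ⟨⟨h.val, Subgroup.le_normalizer h.2⟩, ?_⟩, fun s => by ext; rfl, fun h => rfl⟩
  · obtain ⟨⟨n, hn⟩, hs⟩ := s
    have heq : (⟨n, hn⟩ : (Subgroup.normalizer (H : Set G))) • u = u := hs
    have this := congrArg Subtype.val heq
    rw [smul_UU_val] at this
    show n ∈ H
    rw [← hcent _ u.2.2 u.2.1, Subgroup.mem_centralizer_iff]
    rintro y (rfl : y = u.val)
    dsimp at this ⊢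
    have := congrArg (fun y => y * n) this
    simpa [mul_assoc] using this.symm
  · rw [mem_stabilizer_iff]
    apply Subtype.ext
    rw [smul_UU_val]
    have hcomm := comm_of_mem H hab h.2 u.2.2
    rw [hcomm]
    group
end
lemma nat_card_option (α : Type*) [Finite α] : Nat.card (Option α) = Nat.card α + 1 := by
  cases nonempty_fintype α
  simp [Nat.card_eq_fintype_card]

section
variable {G : Type*} [Group G] [Finite G] (H : Subgroup G)


lemma card_UU_succ : Nat.card (UU H) + 1 = Nat.card H := by
  rw [← nat_card_option]
  apply Nat.card_congr
  apply Equiv.ofBijective (fun o : Option (UU H) => o.elim (1 : H) (fun u => ⟨u.val, u.2.2⟩))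
  constructor
  · rintro (_|u) (_|v) h
    · rfl
    · exact absurd (congrArg Subtype.val h).symm v.2.1
    · exact absurd (congrArg Subtype.val h) u.2.1
    · have h' : (⟨u.val, u.2.2⟩ : H) = ⟨v.val, v.2.2⟩ := h
      rw [Subtype.mk.injEq] at h'
      exact congrArg some (Subtype.ext h')
  · intro h
    by_cases h1 : (h : G) = 1
    · exact ⟨none, (Subtype.ext h1).symm⟩
    · exact ⟨some ⟨h.val, h1, h.2⟩, rfl⟩

lemma card_TT_succ (hab : IsMulCommutative H) (g : ℕ) :
    Nat.card (TT H g) + 1 = Nat.card H ^ g := by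
  letI : CommGroup H := { (inferInstance : Group H) with mul_comm := hab.is_comm.comm }
  rw [← card_zgHom g H, ← nat_card_option]
  apply Nat.card_congr
  apply Equiv.ofBijective (fun o : Option (TT H g) =>
    o.elim (1 : Zg g →* H) (fun t => t.val.codRestrict H (fun x => t.2.2 ⟨x, rfl⟩)))
  constructor
  · rintro (_|u) (_|v) h
    · rfl
    · exfalso
      apply v.2.1
      ext x
      exact (congrArg Subtype.val (DFunLike.congr_fun h x)).symm
    · exfalso
      apply u.2.1
      ext x
      exact congrArg Subtype.val (DFunLike.congr_fun h x)
    · refine congrArg some (Subtype.ext (MonoidHom.ext fun x => ?_))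
      exact congrArg Subtype.val (DFunLike.congr_fun h x)
  · intro ψ
    by_cases h1 : ψ = 1
    · exact ⟨none, by simp [h1]⟩
    · refine ⟨some ⟨H.subtype.comp ψ, ?_, ?_⟩, ?_⟩
      · intro hc
        apply h1
        refine MonoidHom.ext fun x => Subtype.ext ?_
        exact DFunLike.congr_fun hc x
      · rintro y ⟨x, rfl⟩
        exact (ψ x).2
      · ext x
        rfl
end

theorem statement_3 (G : Type*) [Group G] [Finite G] (H : Subgroup G)
    (hab : IsMulCommutative H) (hcard : 2 ≤ Nat.card H)
    (hconj : ∀ K : Subgroup G, Nonempty (K ≃* H) →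
      ∃ g : G, K = Subgroup.map (MulAut.conj g).toMonoidHom H)
    (hcent : ∀ h : G, h ∈ H → h ≠ 1 → Subgroup.centralizer {h} = H)
    (nH : ℕ) (hnH : nH = Nat.card {c : ConjClasses G // ∃ h ∈ H, c = ConjClasses.mk h})
    (g : ℕ) (hg : 1 ≤ g) :
    Nat.card (Zg g →* H) = Nat.card H ^ g ∧
    (ksSub G H (Zg g) : ℚ) =
      ((nH : ℚ) - 1) * (((Nat.card H : ℚ) ^ g - (Nat.card H : ℚ)) / ((Nat.card H : ℚ) - 1))
        + (nH : ℚ) := by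
  letI : CommGroup H := { (inferInstance : Group H) with mul_comm := hab.is_comm.comm }
  refine ⟨card_zgHom g H, ?_⟩
  set N := (Subgroup.normalizer (H : Set G)) with hN
  -- counting the orbit quotients
  have hTT : Nat.card (orbitRel.Quotient N (TT H g)) * Nat.card N
      = Nat.card (TT H g) * Nat.card H :=
    orbit_count (fun t => stabTT_card H hab hcent t)
  have hUU : Nat.card (orbitRel.Quotient N (UU H)) * Nat.card N
      = Nat.card (UU H) * Nat.card H :=
    orbit_count (fun u => stabUU_card H hab hcent u)
  have hT1 := card_TT_succ H hab g
  have hU1 := card_UU_succ H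
  -- the trivial homomorphism lies in the subtype
  have htriv : ∃ K : Subgroup G, Nonempty (K ≃* H) ∧ (1 : Zg g →* G).range ≤ K := by
    refine ⟨H, ⟨MulEquiv.refl _⟩, ?_⟩
    rintro x ⟨y, rfl⟩
    exact H.one_mem
  -- `ksSub` equals the number of orbits plus one
  have hks : ksSub G H (Zg g) = Nat.card (orbitRel.Quotient N (TT H g)) + 1 := by
    rw [← nat_card_option]
    refine (Nat.card_congr (Equiv.ofBijective ?_ ?_)).symm
    · exact fun o => o.elim (Quotient.mk _ ⟨1, htriv⟩)
        (fun q => Quotient.liftOn q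
          (fun t => Quotient.mk _ ⟨t.val, ⟨H, ⟨MulEquiv.refl _⟩, t.2.2⟩⟩)
          (by
            rintro t t' ⟨n, hn⟩
            apply Quotient.sound
            refine ⟨((n : G))⁻¹, fun x => ?_⟩
            have h2 : (n • t').val x = t.val x := congrArg (fun ψ : TT H g => ψ.val x) hn
            rw [smul_TT_val] at h2
            show t'.val x = (n : G)⁻¹ * t.val x * ((n : G)⁻¹)⁻¹
            rw [← h2]
            group))
    constructor
    · rintro (_|q) (_|q') h
      · rfl
      · exfalso
        induction q' using Quotient.inductionOn with
        | h t =>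
          obtain ⟨c, hc⟩ := Quotient.exact h
          apply t.2.1
          refine MonoidHom.ext fun x => ?_
          have := hc x
          simpa using this
      · exfalso
        induction q using Quotient.inductionOn with
        | h t =>
          obtain ⟨c, hc⟩ := Quotient.exact h.symm
          apply t.2.1
          refine MonoidHom.ext fun x => ?_
          have := hc x
          simpa using this
      · congr 1
        induction q using Quotient.inductionOn with
        | h t =>
          induction q' using Quotient.inductionOn with
          | h t' =>
            obtain ⟨c, hc⟩ := Quotient.exact h
            obtain ⟨x₀, hx₀⟩ := hom_exists_ne_one t.2.1
            have hcN : c ∈ N := mem_normalizer_of_conj_mem H hab hcent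
              (t.2.2 ⟨x₀, rfl⟩) hx₀ (by rw [← hc x₀]; exact t'.2.2 ⟨x₀, rfl⟩)
            apply Quotient.sound
            refine ⟨(⟨c, hcN⟩ : N)⁻¹, ?_⟩
            apply Subtype.ext
            refine MonoidHom.ext fun x => ?_
            rw [smul_TT_val]
            show c⁻¹ * t'.val x * c⁻¹⁻¹ = t.val x
            rw [hc x]
            group
    · rintro q
      induction q using Quotient.inductionOn with
      | h φ =>
        obtain ⟨φ, K, hK, hrange⟩ := φ
        obtain ⟨c, rfl⟩ := hconj K hK
        by_cases h1 : φ = 1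
        · refine ⟨none, ?_⟩
          apply Quotient.sound
          exact ⟨1, fun x => by simp [h1]⟩
        · have hψrange : ∀ x, c⁻¹ * φ x * c ∈ H := by
            intro x
            obtain ⟨h0, hh0, hh0'⟩ := hrange ⟨x, rfl⟩
            have : φ x = c * h0 * c⁻¹ := by
              rw [← hh0']; simp [MulAut.conj_apply]
            rw [this]
            simpa [mul_assoc] using hh0
          have hψ1 : (MulAut.conj c⁻¹).toMonoidHom.comp φ ≠ 1 := by
            intro hc1
            apply h1
            refine MonoidHom.ext fun x => ?_
            have := DFunLike.congr_fun hc1 x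
            simp only [MonoidHom.comp_apply, MulEquiv.coe_toMonoidHom, MulAut.conj_apply,
              MonoidHom.one_apply] at this ⊢
            have := congrArg (fun y => c * y * c⁻¹) this
            simpa [mul_assoc] using this
          refine ⟨some (Quotient.mk _ ⟨(MulAut.conj c⁻¹).toMonoidHom.comp φ, hψ1, ?_⟩), ?_⟩
          · rintro y ⟨x, rfl⟩
            simpa [MulAut.conj_apply, mul_assoc] using hψrange x
          · apply Quotient.sound
            refine ⟨c, fun x => ?_⟩
            simp only [MonoidHom.comp_apply, MulEquiv.coe_toMonoidHom, MulAut.conj_apply]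
            group
  -- `nH` equals the number of orbits plus one
  have hnH' : nH = Nat.card (orbitRel.Quotient N (UU H)) + 1 := by
    rw [hnH, ← nat_card_option]
    refine (Nat.card_congr (Equiv.ofBijective ?_ ?_)).symm
    · exact fun o => o.elim ⟨ConjClasses.mk 1, 1, H.one_mem, rfl⟩
        (fun q => Quotient.liftOn q
          (fun u => ⟨ConjClasses.mk u.val, u.val, u.2.2, rfl⟩)
          (by
            rintro u u' ⟨n, hn⟩
            have h2 : (n • u').val = u.val := congrArg Subtype.val hn
            rw [smul_UU_val] at h2
            refine Subtype.ext ?_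
            show ConjClasses.mk u.val = ConjClasses.mk u'.val
            rw [ConjClasses.mk_eq_mk_iff_isConj, isConj_iff]
            exact ⟨((n : G))⁻¹, by rw [← h2]; group⟩))
    constructor
    · rintro (_|q) (_|q') h
      · rfl
      · exfalso
        induction q' using Quotient.inductionOn with
        | h u =>
          have h2 : ConjClasses.mk (1 : G) = ConjClasses.mk u.val := congrArg Subtype.val h
          rw [ConjClasses.mk_eq_mk_iff_isConj, isConj_iff] at h2
          obtain ⟨c, hc⟩ := h2
          exact u.2.1 (by rw [← hc]; group)
      · exfalso
        induction q using Quotient.inductionOn with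
        | h u =>
          have h2 : ConjClasses.mk u.val = ConjClasses.mk (1 : G) := congrArg Subtype.val h
          rw [ConjClasses.mk_eq_mk_iff_isConj, isConj_iff] at h2
          obtain ⟨c, hc⟩ := h2
          apply u.2.1
          have := congrArg (fun y => c⁻¹ * y * c) hc
          simpa [mul_assoc] using this
      · congr 1
        induction q using Quotient.inductionOn with
        | h u =>
          induction q' using Quotient.inductionOn with
          | h u' =>
            have h2 : ConjClasses.mk u.val = ConjClasses.mk u'.val := congrArg Subtype.val h
            rw [ConjClasses.mk_eq_mk_iff_isConj, isConj_iff] at h2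
            obtain ⟨c, hc⟩ := h2
            have hcN : c ∈ N := mem_normalizer_of_conj_mem H hab hcent
              u.2.2 u.2.1 (by rw [hc]; exact u'.2.2)
            apply Quotient.sound
            refine ⟨(⟨c, hcN⟩ : N)⁻¹, ?_⟩
            apply Subtype.ext
            rw [smul_UU_val]
            show c⁻¹ * u'.val * c⁻¹⁻¹ = u.val
            rw [← hc]
            group
    · rintro ⟨cl, h0, hh0, hcl⟩
      by_cases h1 : h0 = 1
      · refine ⟨none, Subtype.ext ?_⟩
        show ConjClasses.mk (1 : G) = cl
        rw [hcl, h1]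
      · refine ⟨some (Quotient.mk _ ⟨h0, h1, hh0⟩), Subtype.ext ?_⟩
        show ConjClasses.mk h0 = cl
        exact hcl.symm
  -- the final computation
  have hNpos : 0 < Nat.card N := Nat.card_pos
  have hq := hTT
  have hp := hUU
  set q := Nat.card (orbitRel.Quotient N (TT H g))
  set p := Nat.card (orbitRel.Quotient N (UU H))
  set h := Nat.card H
  set n := Nat.card N
  have hQt : (Nat.card (TT H g) : ℚ) = (h : ℚ) ^ g - 1 := by
    have h2 := congrArg (Nat.cast : ℕ → ℚ) hT1
    push_cast at h2
    linarith
  have hQu : (Nat.card (UU H) : ℚ) = (h : ℚ) - 1 := by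
    have h2 := congrArg (Nat.cast : ℕ → ℚ) hU1
    push_cast at h2
    linarith
  have hq' : (q : ℚ) * n = ((h : ℚ) ^ g - 1) * h := by
    have := congrArg (fun m : ℕ => (m : ℚ)) hq
    push_cast at this
    rw [← hQt]
    exact_mod_cast this
  have hp' : (p : ℚ) * n = ((h : ℚ) - 1) * h := by
    have := congrArg (fun m : ℕ => (m : ℚ)) hp
    push_cast at this
    rw [← hQu]
    exact_mod_cast this
  have hn0 : (n : ℚ) ≠ 0 := by
    exact_mod_cast hNpos.ne'
  have hkey : (q : ℚ) * ((h : ℚ) - 1) = (p : ℚ) * ((h : ℚ) ^ g - 1) := by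
    apply mul_right_cancel₀ hn0
    calc (q : ℚ) * ((h : ℚ) - 1) * n = ((q : ℚ) * n) * ((h : ℚ) - 1) := by ring
    _ = ((h : ℚ) ^ g - 1) * h * ((h : ℚ) - 1) := by rw [hq']
    _ = ((h : ℚ) ^ g - 1) * ((p : ℚ) * n) := by rw [hp']; ring
    _ = (p : ℚ) * ((h : ℚ) ^ g - 1) * n := by ring
  have hh1 : (h : ℚ) - 1 ≠ 0 := by
    have : (2 : ℚ) ≤ (h : ℚ) := by exact_mod_cast hcard
    intro hc
    nlinarith
  rw [hks, hnH']
  push_cast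
  field_simp
  linear_combination hkey
end

section
/- Every subgroup of the alternating group A5 either is abelian or has trivial centralizer in A5, any two distinct maximal abelian subgroups of A5 intersect trivially, and the maximal abelian subgroups of A5 are exactly ten subgroups isomorphic to ℤ3, five subgroups isomorphic to V4, and six subgroups isomorphic to ℤ5. -/
set_option maxRecDepth 100000
set_option maxHeartbeats 4000000


lemma D2 : ∀ x : A5, x ≠ 1 → x*x = 1 →
    (Finset.univ.filter fun a : A5 => x*a = a*x).card = 4 := by decide
lemma D3 : ∀ x : A5, x ≠ 1 → x*x*x = 1 →
    (Finset.univ.filter fun a : A5 => x*a = a*x).card = 3 := by decide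
lemma D4 : ∀ x : A5, x ≠ 1 → x*x ≠ 1 → x*x*x ≠ 1 →
    (Finset.univ.filter fun a : A5 => x*a = a*x).card = 5 := by decide
lemma D5 : ∀ x : A5, x*x*x*x = 1 → x*x = 1 := by decide
lemma D6 : (Finset.univ.filter fun x : A5 => x ≠ 1 ∧ x*x = 1).card = 15 := by decide
lemma D7 : (Finset.univ.filter fun x : A5 => x ≠ 1 ∧ x*x*x = 1).card = 20 := by decide
lemma D8 : (Finset.univ.filter fun x : A5 => x ≠ 1 ∧ x*x ≠ 1 ∧ x*x*x ≠ 1).card = 24 := by decide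

def Cent (x : A5) : Subgroup A5 := Subgroup.centralizer {x}

lemma mem_Cent {x a : A5} : a ∈ Cent x ↔ x*a = a*x := by
  simp [Cent, Subgroup.mem_centralizer_iff]

lemma self_mem_Cent (x : A5) : x ∈ Cent x := mem_Cent.2 rfl

lemma cardCent (x : A5) : Nat.card (Cent x) =
    (Finset.univ.filter fun a : A5 => x*a = a*x).card := by
  rw [Nat.card_congr (Equiv.subtypeEquivRight (fun a => (mem_Cent (x := x) (a := a))))]
  rw [Nat.card_eq_fintype_card, Fintype.card_subtype]

lemma cardCent345 (x : A5) (hx : x ≠ 1) :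
    Nat.card (Cent x) = 3 ∨ Nat.card (Cent x) = 4 ∨ Nat.card (Cent x) = 5 := by
  rw [cardCent]
  by_cases h2 : x*x = 1
  · exact Or.inr (Or.inl (D2 x hx h2))
  by_cases h3 : x*x*x = 1
  · exact Or.inl (D3 x hx h3)
  · exact Or.inr (Or.inr (D4 x hx h2 h3))

lemma comm_of_card (G : Type*) [Group G] (h : Nat.card G = 3 ∨ Nat.card G = 4 ∨ Nat.card G = 5) :
    ∀ a b : G, a * b = b * a := by
  rcases h with h | h | h
  · haveI : Fact (Nat.Prime 3) := ⟨by norm_num⟩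
    haveI := isCyclic_of_prime_card h
    exact fun a b => (IsCyclic.commGroup (α := G)).mul_comm a b
  · haveI : Fact (Nat.Prime 2) := ⟨by norm_num⟩
    exact IsPGroup.commutative_of_card_eq_prime_sq (p := 2) (by norm_num [h])
  · haveI : Fact (Nat.Prime 5) := ⟨by norm_num⟩
    haveI := isCyclic_of_prime_card h
    exact fun a b => (IsCyclic.commGroup (α := G)).mul_comm a b

lemma commCent (x : A5) (hx : x ≠ 1) : IsMulCommutative (Cent x) :=
  ⟨⟨fun a b => Subtype.ext (comm_of_card _ (cardCent345 x hx) a b ▸ rfl)⟩⟩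

lemma le_Cent {K : Subgroup A5} (hK : IsMulCommutative K) {x : A5} (hx : x ∈ K) : K ≤ Cent x :=
  fun k hk => mem_Cent.2 (congrArg Subtype.val (hK.is_comm.comm (⟨x, hx⟩ : K) ⟨k, hk⟩))

lemma maxAb_Cent (x : A5) (hx : x ≠ 1) : IsMaximalAbelian (Cent x) := by
  refine ⟨commCent x hx, fun K' hK' hle => le_antisymm (le_Cent hK' (hle (self_mem_Cent x))) hle⟩

lemma maxAb_eq_Cent {K : Subgroup A5} (hK : IsMaximalAbelian K) {y : A5} (hy : y ∈ K)
    (hy1 : y ≠ 1) : Cent y = K :=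
  hK.2 (Cent y) (commCent y hy1) (le_Cent hK.1 hy)

lemma pow_type {K : Subgroup A5} {n : ℕ} (hcard : Nat.card K = n) {y : A5} (hy : y ∈ K) :
    y ^ n = 1 := by
  have h := pow_card_eq_one' (G := K) (x := ⟨y, hy⟩)
  rw [hcard] at h
  simpa using congrArg (Subtype.val) h

lemma finite_subgroups : Finite (Subgroup A5) :=
  Finite.of_injective (fun K : Subgroup A5 => (K : Set A5)) SetLike.coe_injective

lemma count_lemma (Q : A5 → Prop) [DecidablePred Q] (n : ℕ)
    (hQ1 : ∀ x, Q x → x ≠ 1)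
    (hQC : ∀ x, Q x → Nat.card (Cent x) = n)
    (hKQ : ∀ K : Subgroup A5, IsMaximalAbelian K → Nat.card K = n →
      ∀ y, y ∈ K → y ≠ 1 → Q y) :
    (Finset.univ.filter Q).card =
      (n-1) * Nat.card {K : Subgroup A5 // IsMaximalAbelian K ∧ Nat.card K = n} := by
  classical
  haveI := finite_subgroups
  letI : Fintype {K : Subgroup A5 // IsMaximalAbelian K ∧ Nat.card K = n} := Fintype.ofFinite _
  let e : {x : A5 // Q x} ≃
      Σ K : {K : Subgroup A5 // IsMaximalAbelian K ∧ Nat.card K = n},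
        {y : (K.1 : Subgroup A5) // y ≠ 1} :=
    { toFun := fun p => ⟨⟨Cent p.1, maxAb_Cent p.1 (hQ1 p.1 p.2), hQC p.1 p.2⟩,
        ⟨⟨p.1, self_mem_Cent p.1⟩, fun h => hQ1 p.1 p.2 (congrArg Subtype.val h)⟩⟩
      invFun := fun q => ⟨(q.2.1 : A5),
        hKQ q.1.1 q.1.2.1 q.1.2.2 _ q.2.1.2 (fun h => q.2.2 (Subtype.ext h))⟩
      left_inv := fun p => rfl
      right_inv := by
        rintro ⟨⟨K, hK, hKn⟩, ⟨⟨y, hyK⟩, hy1⟩⟩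
        have hy1A : y ≠ 1 := fun h => hy1 (Subtype.ext h)
        have hCK : Cent y = K := maxAb_eq_Cent hK hyK hy1A
        subst hCK
        rfl }
  have h1 : (Finset.univ.filter Q).card = Nat.card {x : A5 // Q x} := by
    rw [Nat.card_eq_fintype_card, Fintype.card_subtype]
  rw [h1, Nat.card_congr e, Nat.card_eq_fintype_card, Fintype.card_sigma]
  have hfib : ∀ K : {K : Subgroup A5 // IsMaximalAbelian K ∧ Nat.card K = n},
      Fintype.card {y : (K.1 : Subgroup A5) // y ≠ 1} = n - 1 := by
    rintro ⟨K, hK, hKn⟩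
    have : Fintype.card {y : (K : Subgroup A5) // ¬ (y = 1)} =
        Fintype.card (K : Subgroup A5) - Fintype.card {y : (K : Subgroup A5) // y = 1} :=
      Fintype.card_subtype_compl _
    rw [this, Fintype.card_subtype_eq, ← Nat.card_eq_fintype_card, hKn]
  simp only [hfib]
  rw [Finset.sum_const, smul_eq_mul, Nat.card_eq_fintype_card, Finset.card_univ, Nat.mul_comm]

-- order helpers
lemma eq_one_of_pows {y : A5} {a b : ℕ} (ha : y ^ a = 1) (hb : y ^ b = 1)
    (h : Nat.gcd a b = 1) : y = 1 := by
  have := Nat.dvd_gcd (orderOf_dvd_of_pow_eq_one ha) (orderOf_dvd_of_pow_eq_one hb)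
  rw [h, Nat.dvd_one] at this
  exact orderOf_eq_one_iff.1 this

lemma pow2_mul (y : A5) : y ^ 2 = y*y := by rw [pow_two]
lemma pow3_mul (y : A5) : y ^ 3 = y*y*y := by rw [pow_succ, pow_two]
lemma pow4_mul (y : A5) : y ^ 4 = y*y*y*y := by rw [pow_succ, pow3_mul]
lemma pow5_mul (y : A5) : y ^ 5 = y*y*y*y*y := by rw [pow_succ, pow4_mul]

lemma comm_of_le {K L : Subgroup A5} (h : K ≤ L) (hL : IsMulCommutative L) : IsMulCommutative K :=
  ⟨⟨fun a b => Subtype.ext (show a.1 * b.1 = b.1 * a.1 from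
    Subtype.ext_iff.1 (hL.is_comm.comm (⟨a.1, h a.2⟩ : L) ⟨b.1, h b.2⟩))⟩⟩

-- isomorphism classification by cardinality
lemma card_iso {G H : Type*} [Group G] [Group H] (e : G ≃* H) : Nat.card G = Nat.card H :=
  Nat.card_congr e.toEquiv

lemma cardZ3 : Nat.card Z3 = 3 := by
  simp [Nat.card_eq_fintype_card]
lemma cardZ5 : Nat.card Z5 = 5 := by
  simp [Nat.card_eq_fintype_card]
lemma cardV4 : Nat.card V4 = 4 := by
  simp [Nat.card_eq_fintype_card]

lemma isoZ3_of_card {K : Subgroup A5} (h : Nat.card K = 3) : Nonempty (K ≃* Z3) := by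
  haveI : Fact (Nat.Prime 3) := ⟨by norm_num⟩
  haveI := isCyclic_of_prime_card h
  have e := zmodCyclicMulEquiv this
  rw [h] at e
  exact ⟨e.symm⟩

lemma isoZ5_of_card {K : Subgroup A5} (h : Nat.card K = 5) : Nonempty (K ≃* Z5) := by
  haveI : Fact (Nat.Prime 5) := ⟨by norm_num⟩
  haveI := isCyclic_of_prime_card h
  have e := zmodCyclicMulEquiv this
  rw [h] at e
  exact ⟨e.symm⟩

lemma isoV4_of_card {K : Subgroup A5} (h : Nat.card K = 4) : Nonempty (K ≃* V4) := by
  have hsq : ∀ y : K, y ^ 2 = 1 := by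
    intro y
    have h4 : (y.1 : A5) ^ 4 = 1 := by
      have := pow_type h y.2
      simpa using this
    rw [pow4_mul] at h4
    have h2 := D5 _ h4
    rw [pow_two]
    exact Subtype.ext (by simpa using h2)
  haveI : Nontrivial K := by
    rw [← Finite.one_lt_card_iff_nontrivial, h]; norm_num
  obtain ⟨y, hy⟩ := exists_ne (1 : K)
  haveI : Fact (Nat.Prime 2) := ⟨by norm_num⟩
  have hexp : Monoid.exponent K = 2 := by
    refine Nat.dvd_antisymm (Monoid.exponent_dvd_of_forall_pow_eq_one hsq) ?_
    have : orderOf y = 2 := orderOf_eq_prime (hsq y) hy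
    rw [← this]
    exact Monoid.order_dvd_exponent y
  haveI : IsKleinFour K := ⟨h, hexp⟩
  exact IsKleinFour.nonempty_mulEquiv

lemma dvd345 {a b : ℕ} (ha : a = 3 ∨ a = 4 ∨ a = 5) (hb : b = 3 ∨ b = 4 ∨ b = 5)
    (h : a ∣ b) : a = b := by
  rcases ha with rfl|rfl|rfl <;> rcases hb with rfl|rfl|rfl <;>
    first | rfl | (exfalso; revert h; decide)

-- Part 4 core: a subgroup of card 3,4,5 that is commutative equals a centralizer
lemma maxAb_of_comm_card {K : Subgroup A5} (hcomm : IsMulCommutative K)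
    (hc : Nat.card K = 3 ∨ Nat.card K = 4 ∨ Nat.card K = 5) : IsMaximalAbelian K := by
  haveI : Nontrivial K := by
    rw [← Finite.one_lt_card_iff_nontrivial]
    rcases hc with h|h|h <;> rw [h] <;> norm_num
  obtain ⟨y, hy⟩ := exists_ne (1 : K)
  have hy1 : (y : A5) ≠ 1 := fun h => hy (Subtype.ext h)
  have hle : K ≤ Cent y :=  le_Cent hcomm y.2
  have hdvd : Nat.card K ∣ Nat.card (Cent (y : A5)) := Subgroup.card_dvd_of_le hle
  have heq : Nat.card K = Nat.card (Cent (y : A5)) :=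
    dvd345 hc (cardCent345 _ hy1) hdvd
  have : K = Cent (y : A5) := Subgroup.eq_of_le_of_card_ge hle (le_of_eq heq.symm)
  rw [this]
  exact maxAb_Cent _ hy1

-- Part 3 core
lemma card_of_maxAb {K : Subgroup A5} (hK : IsMaximalAbelian K) :
    Nat.card K = 3 ∨ Nat.card K = 4 ∨ Nat.card K = 5 := by
  have hx0 : ∃ x : A5, x ≠ 1 := by
    refine ⟨⟨finRotate 5, ?_⟩, ?_⟩
    · rw [Equiv.Perm.mem_alternatingGroup, sign_finRotate 5]
      decide
    · intro h
      have : (finRotate 5 : Equiv.Perm (Fin 5)) = 1 := congrArg Subtype.val h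
      exact absurd this (by decide)
  obtain ⟨x₀, hx₀⟩ := hx0
  have hKbot : K ≠ ⊥ := by
    intro hbot
    have hz := hK.2 (Subgroup.zpowers x₀) (Subgroup.zpowers_isMulCommutative x₀)
      (hbot ▸ bot_le)
    have h1 : x₀ ∈ Subgroup.zpowers x₀ := Subgroup.mem_zpowers x₀
    rw [hz, hbot] at h1
    exact hx₀ (Subgroup.mem_bot.1 h1)
  obtain ⟨y, hyK, hy1⟩ : ∃ y ∈ K, y ≠ 1 := by
    by_contra h
    push_neg at h
    exact hKbot ((Subgroup.eq_bot_iff_forall K).2 h)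
  rw [← maxAb_eq_Cent hK hyK hy1]
  exact cardCent345 y hy1

lemma comm_of_iso {K : Subgroup A5} {H : Type*} [CommGroup H] (e : K ≃* H) :
    IsMulCommutative K :=
  ⟨⟨fun a b => e.injective (by rw [map_mul, map_mul, mul_comm])⟩⟩

lemma Scount3 : Nat.card {K : Subgroup A5 // IsMaximalAbelian K ∧ Nat.card K = 3} = 10 := by
  have h := count_lemma (fun x : A5 => x ≠ 1 ∧ x*x*x = 1) 3 (fun x hx => hx.1)
    (fun x hx => by rw [cardCent]; exact D3 x hx.1 hx.2)
    (fun K hK hc y hyK hy1 =>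
      ⟨hy1, by have := pow_type hc hyK; rwa [pow3_mul] at this⟩)
  rw [D7] at h
  omega

lemma Scount4 : Nat.card {K : Subgroup A5 // IsMaximalAbelian K ∧ Nat.card K = 4} = 5 := by
  have h := count_lemma (fun x : A5 => x ≠ 1 ∧ x*x = 1) 4 (fun x hx => hx.1)
    (fun x hx => by rw [cardCent]; exact D2 x hx.1 hx.2)
    (fun K hK hc y hyK hy1 =>
      ⟨hy1, by have := pow_type hc hyK; rw [pow4_mul] at this; exact D5 y this⟩)
  rw [D6] at h
  omega

lemma Scount5 : Nat.card {K : Subgroup A5 // IsMaximalAbelian K ∧ Nat.card K = 5} = 6 := by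
  have h := count_lemma (fun x : A5 => x ≠ 1 ∧ x*x ≠ 1 ∧ x*x*x ≠ 1) 5 (fun x hx => hx.1)
    (fun x hx => by rw [cardCent]; exact D4 x hx.1 hx.2.1 hx.2.2)
    (fun K hK hc y hyK hy1 => by
      have h5 := pow_type hc hyK
      refine ⟨hy1, fun h2 => hy1 ?_, fun h3 => hy1 ?_⟩
      · exact eq_one_of_pows (a := 2) (by rwa [pow2_mul]) h5 (by norm_num)
      · exact eq_one_of_pows (a := 3) (by rwa [pow3_mul]) h5 (by norm_num))
  rw [D8] at h
  omega

lemma iff3 (K : Subgroup A5) :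
    (IsMaximalAbelian K ∧ Nonempty (K ≃* Z3)) ↔ (IsMaximalAbelian K ∧ Nat.card K = 3) := by
  constructor
  · rintro ⟨h, ⟨e⟩⟩; exact ⟨h, (card_iso e).trans cardZ3⟩
  · rintro ⟨h, hc⟩; exact ⟨h, isoZ3_of_card hc⟩

lemma iff4 (K : Subgroup A5) :
    (IsMaximalAbelian K ∧ Nonempty (K ≃* V4)) ↔ (IsMaximalAbelian K ∧ Nat.card K = 4) := by
  constructor
  · rintro ⟨h, ⟨e⟩⟩; exact ⟨h, (card_iso e).trans cardV4⟩
  · rintro ⟨h, hc⟩; exact ⟨h, isoV4_of_card hc⟩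

lemma iff5 (K : Subgroup A5) :
    (IsMaximalAbelian K ∧ Nonempty (K ≃* Z5)) ↔ (IsMaximalAbelian K ∧ Nat.card K = 5) := by
  constructor
  · rintro ⟨h, ⟨e⟩⟩; exact ⟨h, (card_iso e).trans cardZ5⟩
  · rintro ⟨h, hc⟩; exact ⟨h, isoZ5_of_card hc⟩


theorem statement_5 :
    (∀ K : Subgroup A5, IsMulCommutative K ∨ Subgroup.centralizer (K : Set A5) = ⊥) ∧
    (∀ K K' : Subgroup A5, IsMaximalAbelian K → IsMaximalAbelian K' → K ≠ K' → K ⊓ K' = ⊥) ∧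
    (∀ K : Subgroup A5, IsMaximalAbelian K →
      (Nonempty (K ≃* Z3) ∨ Nonempty (K ≃* V4) ∨ Nonempty (K ≃* Z5))) ∧
    (∀ K : Subgroup A5, (Nonempty (K ≃* Z3) ∨ Nonempty (K ≃* V4) ∨ Nonempty (K ≃* Z5)) →
      IsMaximalAbelian K) ∧
    Nat.card {K : Subgroup A5 // IsMaximalAbelian K ∧ Nonempty (K ≃* Z3)} = 10 ∧
    Nat.card {K : Subgroup A5 // IsMaximalAbelian K ∧ Nonempty (K ≃* V4)} = 5 ∧
    Nat.card {K : Subgroup A5 // IsMaximalAbelian K ∧ Nonempty (K ≃* Z5)} = 6 := by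
  refine ⟨?_, ?_, ?_, ?_, ?_, ?_, ?_⟩
  · intro K
    by_cases hc : IsMulCommutative K
    · exact Or.inl hc
    · refine Or.inr ((Subgroup.eq_bot_iff_forall _).2 fun z hz => ?_)
      by_contra hz1
      refine hc (comm_of_le (fun k hk => mem_Cent.2 ?_) (commCent z hz1))
      exact ((Subgroup.mem_centralizer_iff).1 hz k hk).symm
  · intro K K' h h' hne
    refine (Subgroup.eq_bot_iff_forall _).2 fun z hz => ?_
    by_contra hz1
    exact hne ((maxAb_eq_Cent h (Subgroup.mem_inf.1 hz).1 hz1).symm.trans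
      (maxAb_eq_Cent h' (Subgroup.mem_inf.1 hz).2 hz1))
  · intro K hK
    rcases card_of_maxAb hK with h|h|h
    · exact Or.inl (isoZ3_of_card h)
    · exact Or.inr (Or.inl (isoV4_of_card h))
    · exact Or.inr (Or.inr (isoZ5_of_card h))
  · intro K h
    rcases h with he|he|he <;> obtain ⟨e⟩ := he
    · exact maxAb_of_comm_card (comm_of_iso e) (Or.inl ((card_iso e).trans cardZ3))
    · exact maxAb_of_comm_card (comm_of_iso e) (Or.inr (Or.inl ((card_iso e).trans cardV4)))
    · exact maxAb_of_comm_card (comm_of_iso e) (Or.inr (Or.inr ((card_iso e).trans cardZ5)))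
  · rw [Nat.card_congr (Equiv.subtypeEquivRight iff3)]; exact Scount3
  · rw [Nat.card_congr (Equiv.subtypeEquivRight iff4)]; exact Scount4
  · rw [Nat.card_congr (Equiv.subtypeEquivRight iff5)]; exact Scount5
end

section
/- For every integer g ≥ 1: the number of conjugacy classes of homomorphisms from ℤ^g to A4 whose image is contained in some subgroup of A4 isomorphic to ℤ3 equals 3^g, and the number of conjugacy classes of homomorphisms from ℤ^g to A4 whose image is contained in some subgroup of A4 isomorphic to V4 equals (4^g − 4)/3 + 2. -/
namespace Stmt6

/-! ### Concrete subgroups of `A4` -/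

instance : DecidablePred (· ∈ alternatingGroup (Fin 4)) :=
  fun x => decidable_of_iff _ (Equiv.Perm.mem_alternatingGroup).symm

def σ : A4 := ⟨c[0,1,2], by decide⟩
def wa : A4 := ⟨Equiv.swap 0 1 * Equiv.swap 2 3, by decide⟩
def wb : A4 := ⟨Equiv.swap 0 2 * Equiv.swap 1 3, by decide⟩
def wc : A4 := ⟨Equiv.swap 0 3 * Equiv.swap 1 2, by decide⟩

def P3 (x : A4) : Prop := x = 1 ∨ x = σ ∨ x = σ * σ
def P4 (x : A4) : Prop := x = 1 ∨ x = wa ∨ x = wb ∨ x = wc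

instance : DecidablePred P3 := fun x => inferInstanceAs (Decidable (_ ∨ _))
instance : DecidablePred P4 := fun x => inferInstanceAs (Decidable (_ ∨ _))

def K0 : Subgroup A4 where
  carrier := setOf P3
  mul_mem' := fun {a b} ha hb => (by decide : ∀ a b : A4, P3 a → P3 b → P3 (a*b)) a b ha hb
  one_mem' := Or.inl rfl
  inv_mem' := fun {a} ha => (by decide : ∀ a : A4, P3 a → P3 a⁻¹) a ha

def W : Subgroup A4 where
  carrier := setOf P4
  mul_mem' := fun {a b} ha hb => (by decide : ∀ a b : A4, P4 a → P4 b → P4 (a*b)) a b ha hb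
  one_mem' := Or.inl rfl
  inv_mem' := fun {a} ha => (by decide : ∀ a : A4, P4 a → P4 a⁻¹) a ha

lemma mem_K0 {x : A4} : x ∈ K0 ↔ P3 x := Iff.rfl
lemma mem_W {x : A4} : x ∈ W ↔ P4 x := Iff.rfl

instance : DecidablePred (· ∈ K0) := fun x => inferInstanceAs (Decidable (P3 x))
instance : DecidablePred (· ∈ W) := fun x => inferInstanceAs (Decidable (P4 x))

instance : CommGroup K0 :=
  { K0.toGroup with
    mul_comm := fun a b => Subtype.ext <|
      (by decide : ∀ x y : A4, P3 x → P3 y → x*y = y*x) a b a.2 b.2 }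

instance : CommGroup W :=
  { W.toGroup with
    mul_comm := fun a b => Subtype.ext <|
      (by decide : ∀ x y : A4, P4 x → P4 y → x*y = y*x) a b a.2 b.2 }

def z3hom : Z3 →* A4 :=
  MonoidHom.mk' (fun y => σ ^ (Multiplicative.toAdd y).val) (by decide)

def v4hom : V4 →* A4 :=
  MonoidHom.mk' (fun y => wa ^ (Multiplicative.toAdd y).1.val * wb ^ (Multiplicative.toAdd y).2.val)
    (by decide)

lemma K0_iso : Nonempty (K0 ≃* Z3) := by
  have hinj : Function.Injective z3hom := fun a b h => by revert h; revert a b; decide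
  have hr : z3hom.range = K0 := SetLike.ext fun x => by
    simp only [MonoidHom.mem_range, mem_K0]
    revert x; decide
  exact ⟨((MulEquiv.subgroupCongr hr).symm.trans (MonoidHom.ofInjective hinj).symm)⟩

lemma W_iso : Nonempty (W ≃* V4) := by
  have hinj : Function.Injective v4hom := fun a b h => by revert h; revert a b; decide
  have hr : v4hom.range = W := SetLike.ext fun x => by
    simp only [MonoidHom.mem_range, mem_W]
    revert x; decide
  exact ⟨((MulEquiv.subgroupCongr hr).symm.trans (MonoidHom.ofInjective hinj).symm)⟩

/-! ### Homomorphisms from a free abelian group -/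

def gen (g : ℕ) (i : Fin g) : Zg g := Multiplicative.ofAdd (Pi.single i 1)

lemma ofAdd_eq_prod {g : ℕ} (v : Fin g → ℤ) :
    (Multiplicative.ofAdd v : Zg g) = ∏ i, gen g i ^ (v i) := by
  refine Multiplicative.toAdd.injective ?_
  rw [toAdd_ofAdd, toAdd_prod]
  simp only [toAdd_zpow]
  have hg : ∀ i : Fin g, Multiplicative.toAdd (gen g i) = Pi.single i (1:ℤ) := fun _ => rfl
  simp only [hg]
  funext j
  rw [Finset.sum_apply, Finset.sum_eq_single j]
  · simp
  · intro b _ hbj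
    simp [Pi.single_eq_of_ne hbj.symm]
  · simp

lemma closure_gen (g : ℕ) : Subgroup.closure (Set.range (gen g)) = ⊤ := by
  rw [eq_top_iff]
  rintro x -
  have h : x = ∏ i, gen g i ^ (Multiplicative.toAdd x i) := ofAdd_eq_prod (Multiplicative.toAdd x)
  rw [h]
  exact Subgroup.prod_mem _ fun i _ =>
    Subgroup.zpow_mem _ (Subgroup.subset_closure (Set.mem_range.mpr ⟨i, rfl⟩)) _

lemma hom_ext {G : Type*} [Group G] {g : ℕ} {φ ψ : Zg g →* G}
    (h : ∀ i, φ (gen g i) = ψ (gen g i)) : φ = ψ :=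
  MonoidHom.eq_of_eqOn_top (by
    rw [← closure_gen g]
    refine MonoidHom.eqOn_closure ?_
    intro x hx
    obtain ⟨i, rfl⟩ := hx
    exact h i)

def tupleToHom {g : ℕ} {H : Type*} [CommGroup H] (f : Fin g → H) : Zg g →* H where
  toFun v := ∏ i, f i ^ (Multiplicative.toAdd v i)
  map_one' := by simp
  map_mul' v w := by
    simp only [toAdd_mul, Pi.add_apply, zpow_add]
    exact Finset.prod_mul_distrib

lemma tupleToHom_gen {g : ℕ} {H : Type*} [CommGroup H] (f : Fin g → H) (j : Fin g) :
    tupleToHom f (gen g j) = f j := by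
  show (∏ i, f i ^ ((Pi.single j (1:ℤ) : Fin g → ℤ) i)) = f j
  rw [Finset.prod_eq_single j]
  · rw [Pi.single_eq_same, zpow_one]
  · intro b _ hbj
    rw [Pi.single_eq_of_ne hbj, zpow_zero]
  · intro hj; exact absurd (Finset.mem_univ j) hj

def homEquiv (g : ℕ) {H : Type*} [CommGroup H] : (Zg g →* H) ≃ (Fin g → H) where
  toFun φ i := φ (gen g i)
  invFun := tupleToHom
  left_inv φ := hom_ext fun i => tupleToHom_gen _ i
  right_inv f := funext fun i => tupleToHom_gen f i

def rangeEquiv {Γ G : Type*} [Group Γ] [Group G] (K : Subgroup G) :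
    {φ : Γ →* G // φ.range ≤ K} ≃ (Γ →* K) where
  toFun φ := (φ.1).codRestrict K (fun x => φ.2 (MonoidHom.mem_range.mpr ⟨x, rfl⟩))
  invFun ψ := ⟨K.subtype.comp ψ, by
    rintro x hx
    obtain ⟨v, rfl⟩ := MonoidHom.mem_range.mp hx
    exact (ψ v).2⟩
  left_inv φ := Subtype.ext (MonoidHom.ext fun x => rfl)
  right_inv ψ := MonoidHom.ext fun x => Subtype.ext rfl

/-! ### Generic orbit counting for an order-3 symmetry -/

def setoidS {X : Type*} (s : X → X) (hs : ∀ x, s (s (s x)) = x) : Setoid X where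
  r x y := y = x ∨ y = s x ∨ y = s (s x)
  iseqv := by
    constructor
    · intro x; exact Or.inl rfl
    · rintro x y (rfl | rfl | rfl)
      · exact Or.inl rfl
      · exact Or.inr (Or.inr (hs x).symm)
      · exact Or.inr (Or.inl (hs x).symm)
    · rintro x y z (rfl | rfl | rfl) (rfl | rfl | rfl)
      · exact Or.inl rfl
      · exact Or.inr (Or.inl rfl)
      · exact Or.inr (Or.inr rfl)
      · exact Or.inr (Or.inl rfl)
      · exact Or.inr (Or.inr rfl)
      · exact Or.inl (hs x)
      · exact Or.inr (Or.inr rfl)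
      · exact Or.inl (hs x)
      · exact Or.inr (Or.inl (congrArg s (hs x)))

lemma card_quot_setoidS {X : Type*} [Fintype X] [DecidableEq X] (s : X → X)
    (hs : ∀ x, s (s (s x)) = x) (x₀ : X) (hfix : ∀ x, s x = x → x = x₀) (hx₀ : s x₀ = x₀) :
    3 * Nat.card (Quotient (setoidS s hs)) = Nat.card X + 2 := by
  letI : DecidableRel (setoidS s hs).r := fun x y => inferInstanceAs (Decidable (_ ∨ _))
  have hexact : ∀ x : X, Quotient.mk (setoidS s hs) x = Quotient.mk (setoidS s hs) x₀ → x = x₀ := by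
    intro x h
    rcases Quotient.exact h with h' | h' | h'
    · exact h'.symm
    · have h2 := congrArg s (congrArg s h')
      rw [hs, hx₀, hx₀] at h2
      exact h2.symm
    · have h2 := congrArg s h'
      rw [hs, hx₀] at h2
      exact h2.symm
  have key : ∀ x : X,
      (Finset.univ.filter fun y => Quotient.mk (setoidS s hs) y = Quotient.mk (setoidS s hs) x).card
        = if x = x₀ then 1 else 3 := by
    intro x
    have hset : (Finset.univ.filter fun y =>
        Quotient.mk (setoidS s hs) y = Quotient.mk (setoidS s hs) x)
        = ({x, s x, s (s x)} : Finset X) := by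
      ext y
      simp only [Finset.mem_filter, Finset.mem_univ, true_and, Finset.mem_insert,
        Finset.mem_singleton]
      rw [Quotient.eq]
      show (x = y ∨ x = s y ∨ x = s (s y)) ↔ _
      constructor
      · rintro (rfl | h | h)
        · exact Or.inl rfl
        · exact Or.inr (Or.inr (by rw [h, hs]))
        · exact Or.inr (Or.inl (by rw [h, hs]))
      · rintro (rfl | rfl | rfl)
        · exact Or.inl rfl
        · exact Or.inr (Or.inr (hs x).symm)
        · exact Or.inr (Or.inl (hs x).symm)
    rw [hset]
    by_cases hx : x = x₀
    · subst hx
      rw [if_pos rfl]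
      simp [hx₀]
    · have h1 : s x ≠ x := fun h => hx (hfix x h)
      have h2 : s (s x) ≠ x := by
        intro h
        have h' := congrArg s h
        rw [hs] at h'
        exact h1 h'.symm
      have h3 : s x ≠ s (s x) := by
        intro h
        have h' := congrArg s (congrArg s h)
        rw [hs x] at h'
        exact h1 h'.symm
      rw [if_neg hx]
      have hm1 : x ∉ ({s x, s (s x)} : Finset X) := by
        simp only [Finset.mem_insert, Finset.mem_singleton]
        push_neg
        exact ⟨fun h => h1 h.symm, fun h => h2 h.symm⟩
      have hm2 : s x ∉ ({s (s x)} : Finset X) := by simpa using h3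
      rw [Finset.card_insert_of_notMem hm1, Finset.card_insert_of_notMem hm2,
        Finset.card_singleton]
  have keyq : ∀ q : Quotient (setoidS s hs),
      (Finset.univ.filter fun y => Quotient.mk (setoidS s hs) y = q).card
        = if q = Quotient.mk (setoidS s hs) x₀ then 1 else 3 := by
    refine Quotient.ind ?_
    intro x
    rw [key x]
    by_cases hxx : x = x₀
    · subst hxx; rw [if_pos rfl, if_pos rfl]
    · rw [if_neg hxx, if_neg (fun h => hxx (hexact x h))]
  have hcardsum := Finset.card_eq_sum_card_fiberwise
    (f := fun y : X => Quotient.mk (setoidS s hs) y) (s := Finset.univ) (t := Finset.univ)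
    (fun x _ => Finset.mem_univ _)
  simp only [keyq] at hcardsum
  rw [← Finset.sum_erase_add _ _ (Finset.mem_univ (Quotient.mk (setoidS s hs) x₀)),
    Finset.sum_congr rfl (fun q hq => if_neg (Finset.ne_of_mem_erase hq)),
    Finset.sum_const, smul_eq_mul, if_pos rfl,
    Finset.card_erase_of_mem (Finset.mem_univ _), Finset.card_univ, Finset.card_univ] at hcardsum
  have hpos : 0 < Fintype.card (Quotient (setoidS s hs)) :=
    Fintype.card_pos_iff.mpr ⟨Quotient.mk (setoidS s hs) x₀⟩
  rw [Nat.card_eq_fintype_card, Nat.card_eq_fintype_card]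
  omega

/-! ### The `Z3` count -/

lemma conj_into_K0 {g : ℕ} (φ : Zg g →* A4)
    (h : ∃ K : Subgroup A4, Nonempty (K ≃* Z3) ∧ φ.range ≤ K) :
    ∃ t : A4, ∀ x, t * φ x * t⁻¹ ∈ K0 := by
  obtain ⟨K, ⟨e⟩, hle⟩ := h
  by_cases htriv : ∀ x, φ x = 1
  · exact ⟨1, fun x => by rw [htriv x]; simpa using K0.one_mem⟩
  · push_neg at htriv
    obtain ⟨x₀, hx₀⟩ := htriv
    have hcK : φ x₀ ∈ K := hle (MonoidHom.mem_range.mpr ⟨x₀, rfl⟩)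
    set c : K := ⟨φ x₀, hcK⟩ with hc
    have hce : e c ≠ 1 := by
      intro h1
      exact hx₀ (congrArg Subtype.val (e.injective (h1.trans (map_one e).symm)))
    have hc3 : (c : A4) * c * c = 1 := by
      have h1 : c * c * c = 1 := e.injective
        (by rw [map_mul, map_mul, map_one]; exact (by decide : ∀ u : Z3, u*u*u = 1) (e c))
      exact congrArg Subtype.val h1
    obtain ⟨t, ht⟩ := (by decide : ∀ c : A4, c*c*c = 1 → ∃ t : A4, P3 (t*c*t⁻¹)) _ hc3
    refine ⟨t, fun x => ?_⟩
    have hxK : φ x ∈ K := hle (MonoidHom.mem_range.mpr ⟨x, rfl⟩)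
    obtain ⟨n, hn⟩ := (by decide : ∀ u v : Z3, u ≠ 1 → ∃ n : Fin 3, u ^ (n:ℕ) = v)
      (e c) (e ⟨φ x, hxK⟩) hce
    have h2 : (⟨φ x, hxK⟩ : K) = c ^ (n:ℕ) := (e.injective (by rw [map_pow, hn])).symm
    have h3 : φ x = (c : A4) ^ (n:ℕ) := by
      have h4 := congrArg Subtype.val h2
      simpa using h4
    rw [h3, ← conj_pow]
    exact K0.pow_mem (mem_K0.mpr ht) _

lemma z3_count (g : ℕ) : ksSub A4 Z3 (Zg g) = 3 ^ g := by
  classical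
  unfold ksSub
  set P : (Zg g →* A4) → Prop :=
    fun φ => ∃ K : Subgroup A4, Nonempty (K ≃* Z3) ∧ φ.range ≤ K with hP
  set St := Setoid.comap (Subtype.val : {φ : Zg g →* A4 // P φ} → (Zg g →* A4))
    (homConj (Zg g) A4) with hSt
  let toHom : (Fin g → K0) → (Zg g →* A4) := fun f => K0.subtype.comp (tupleToHom f)
  have toHom_gen : ∀ (f : Fin g → K0) i, toHom f (gen g i) = ((f i : A4)) := fun f i => by
    show K0.subtype (tupleToHom f (gen g i)) = _
    rw [tupleToHom_gen]
    rfl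
  have toHom_range : ∀ f, (toHom f).range ≤ K0 := by
    intro f x hx
    obtain ⟨v, rfl⟩ := MonoidHom.mem_range.mp hx
    exact (tupleToHom f v).2
  let F : (Fin g → K0) → Quotient St := fun f =>
    Quotient.mk St ⟨toHom f, K0, K0_iso, toHom_range f⟩
  have hinj : Function.Injective F := by
    intro f f' hff
    obtain ⟨t, ht⟩ := Quotient.exact hff
    have hgen : ∀ i, ((f' i : A4)) = t * (f i : A4) * t⁻¹ := fun i => by
      have h5 := ht (gen g i)
      rwa [toHom_gen, toHom_gen] at h5
    by_cases htriv : ∀ i, f i = 1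
    · funext i
      have h1 : (f i : A4) = 1 := congrArg Subtype.val (htriv i)
      have h2 : ((f' i : A4)) = 1 := by rw [hgen i, h1]; simp
      exact Subtype.ext (h1.trans h2.symm)
    · push_neg at htriv
      obtain ⟨i₀, hi₀⟩ := htriv
      have hc1 : ((f i₀ : A4)) ≠ 1 := fun h => hi₀ (Subtype.ext h)
      have hkey := (by decide :
        ∀ t c : A4, P3 c → c ≠ 1 → P3 (t*c*t⁻¹) → ∀ x : A4, P3 x → t*x*t⁻¹ = x)
        t (f i₀ : A4) (f i₀).2 hc1 (by rw [← hgen i₀]; exact (f' i₀).2)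
      funext i
      refine Subtype.ext ?_
      rw [hgen i, hkey _ (f i).2]
  have hsurj : Function.Surjective F := by
    refine Quotient.ind ?_
    rintro ⟨φ, hφ⟩
    obtain ⟨t, ht⟩ := conj_into_K0 φ hφ
    refine ⟨fun i => ⟨t * φ (gen g i) * t⁻¹, ht _⟩, ?_⟩
    refine Quotient.sound ?_
    have hhom : toHom (fun i => ⟨t * φ (gen g i) * t⁻¹, ht _⟩) =
        ((MulAut.conj t).toMonoidHom.comp φ) := by
      refine hom_ext fun i => ?_
      rw [toHom_gen]
      simp [MulAut.conj_apply]
    have h6 : ∀ y, toHom (fun i => ⟨t * φ (gen g i) * t⁻¹, ht _⟩) y = t * φ y * t⁻¹ := by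
      intro y
      rw [hhom]
      simp [MulAut.conj_apply]
    refine ⟨t⁻¹, fun x => ?_⟩
    show φ x = t⁻¹ * toHom (fun i => ⟨t * φ (gen g i) * t⁻¹, ht _⟩) x * t⁻¹⁻¹
    rw [h6 x]
    group
  have hcard := Nat.card_congr (Equiv.ofBijective F ⟨hinj, hsurj⟩)
  have hK0 : Nat.card K0 = 3 := by
    rw [Nat.card_congr K0_iso.some.toEquiv, Nat.card_congr Multiplicative.toAdd, Nat.card_zmod]
  rw [← hcard, Nat.card_fun, hK0, Nat.card_eq_fintype_card, Fintype.card_fin]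

/-! ### The `V4` count -/

lemma sq_one_of_mem {K : Subgroup A4} (e : K ≃* V4) {x : A4} (hx : x ∈ K) : x * x = 1 := by
  have h : (⟨x, hx⟩ : K) * ⟨x, hx⟩ = 1 :=
    e.injective (by rw [map_mul, map_one]; exact (by decide : ∀ v : V4, v * v = 1) _)
  exact congrArg Subtype.val h

lemma prop4_iff {g : ℕ} (φ : Zg g →* A4) :
    (∃ K : Subgroup A4, Nonempty (K ≃* V4) ∧ φ.range ≤ K) ↔ φ.range ≤ W := by
  constructor
  · rintro ⟨K, ⟨e⟩, hle⟩ x hx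
    exact mem_W.mpr ((by decide : ∀ x : A4, x*x = 1 → P4 x) x (sq_one_of_mem e (hle hx)))
  · intro h
    exact ⟨W, W_iso, h⟩

def sConj (g : ℕ) : (Fin g → W) → (Fin g → W) := fun f i =>
  ⟨σ * (f i : A4) * σ⁻¹, mem_W.mpr ((by decide : ∀ x : A4, P4 x → P4 (σ*x*σ⁻¹)) _ (f i).2)⟩

lemma sConj3 (g : ℕ) : ∀ f, sConj g (sConj g (sConj g f)) = f := by
  intro f; funext i
  exact Subtype.ext ((by decide : ∀ x : A4, σ*(σ*(σ*x*σ⁻¹)*σ⁻¹)*σ⁻¹ = x) (f i : A4))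

lemma v4_count (g : ℕ) : 3 * ksSub A4 V4 (Zg g) = 4 ^ g + 2 := by
  classical
  unfold ksSub
  let e : {φ : Zg g →* A4 // ∃ K : Subgroup A4, Nonempty (K ≃* V4) ∧ φ.range ≤ K}
      ≃ (Fin g → W) :=
    (Equiv.subtypeEquivRight (fun φ => prop4_iff φ)).trans ((rangeEquiv W).trans (homEquiv g))
  have e_apply : ∀ a i, ((e a i : A4)) = a.1 (gen g i) := fun a i => rfl
  have hrel : ∀ a b, (Setoid.comap (Subtype.val :
        {φ : Zg g →* A4 // ∃ K : Subgroup A4, Nonempty (K ≃* V4) ∧ φ.range ≤ K} → (Zg g →* A4))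
      (homConj (Zg g) A4)) a b ↔ (setoidS (sConj g) (sConj3 g)) (e a) (e b) := by
    intro a b
    have haW : ∀ i, P4 (a.1 (gen g i)) := fun i =>
      mem_W.mp ((prop4_iff a.1).mp a.2 (MonoidHom.mem_range.mpr ⟨_, rfl⟩))
    constructor
    · rintro ⟨t, ht⟩
      rcases (by decide : ∀ t : A4, (∀ x, P4 x → t*x*t⁻¹ = x) ∨ (∀ x, P4 x → t*x*t⁻¹ = σ*x*σ⁻¹)
          ∨ (∀ x, P4 x → t*x*t⁻¹ = σ*(σ*x*σ⁻¹)*σ⁻¹)) t with hc | hc | hc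
      · refine Or.inl (funext fun i => Subtype.ext ?_)
        show ((e b i : A4)) = ((e a i : A4))
        rw [e_apply, e_apply, ht (gen g i), hc _ (haW i)]
      · refine Or.inr (Or.inl (funext fun i => Subtype.ext ?_))
        show ((e b i : A4)) = σ * ((e a i : A4)) * σ⁻¹
        rw [e_apply, e_apply, ht (gen g i), hc _ (haW i)]
      · refine Or.inr (Or.inr (funext fun i => Subtype.ext ?_))
        show ((e b i : A4)) = σ * (σ * ((e a i : A4)) * σ⁻¹) * σ⁻¹
        rw [e_apply, e_apply, ht (gen g i), hc _ (haW i)]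
    · have key : ∀ (u : A4), (∀ i, (b.1) (gen g i) = u * (a.1) (gen g i) * u⁻¹) →
          ∃ s : A4, ∀ x, b.1 x = s * a.1 x * s⁻¹ := by
        intro u hu
        refine ⟨u, fun x => ?_⟩
        have hb : b.1 = ((MulAut.conj u).toMonoidHom.comp a.1) := by
          refine hom_ext fun i => ?_
          rw [hu i]
          simp [MulAut.conj_apply]
        rw [hb]
        simp [MulAut.conj_apply]
      rintro (h | h | h)
      · have hba : b = a := e.injective h
        refine ⟨1, fun x => ?_⟩
        rw [hba]
        simp
      · refine key σ fun i => ?_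
        have h5 := congrArg (fun f => ((f i : W) : A4)) h
        rw [e_apply] at h5
        rw [h5]
        rfl
      · refine key (σ * σ) fun i => ?_
        have h5 := congrArg (fun f => ((f i : W) : A4)) h
        rw [e_apply] at h5
        rw [h5]
        show σ * (σ * ((e a i : A4)) * σ⁻¹) * σ⁻¹ = _
        rw [e_apply]
        group
  have hQ := Nat.card_congr (Quotient.congr e hrel)
  rw [hQ]
  have hfix : ∀ f, sConj g f = f → f = (fun _ => (1 : W)) := by
    intro f h
    funext i
    have h5 := congrArg (fun f => ((f i : W) : A4)) h
    exact Subtype.ext ((by decide : ∀ x : A4, P4 x → σ*x*σ⁻¹ = x → x = 1) _ (f i).2 h5)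
  have hx₀ : sConj g (fun _ => (1 : W)) = (fun _ => (1 : W)) := by
    funext i
    refine Subtype.ext ?_
    show σ * ((1 : W) : A4) * σ⁻¹ = ((1 : W) : A4)
    simp
  rw [card_quot_setoidS (sConj g) (sConj3 g) (fun _ => (1 : W)) hfix hx₀]
  have hW : Nat.card W = 4 := by
    rw [Nat.card_congr W_iso.some.toEquiv, Nat.card_congr Multiplicative.toAdd, Nat.card_prod,
      Nat.card_zmod]
  rw [Nat.card_fun, hW, Nat.card_eq_fintype_card, Fintype.card_fin]

end Stmt6

theorem statement_6 (g : ℕ) (hg : 1 ≤ g) :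
    ksSub A4 Z3 (Zg g) = 3 ^ g ∧
    (ksSub A4 V4 (Zg g) : ℚ) = ((4 : ℚ) ^ g - 4) / 3 + 2 := by
  constructor
  · exact Stmt6.z3_count g
  · have h := Stmt6.v4_count g
    have h' : (3:ℚ) * (ksSub A4 V4 (Zg g) : ℚ) = 4 ^ g + 2 := by exact_mod_cast h
    field_simp
    linarith [h']
end

section
/- Let Γ be a finitely generated group whose abelianization is a free abelian group of rank g ≥ 1. Then the number of homomorphisms from Γ to A4 satisfies |Hom(Γ, A4)| = 12·ks_{A4}(Γ) − 8·3^g − 3·4^g. -/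
/-! ### Auxiliary lemmas -/

/-- The conjugation action of `G` on `Γ →* G`. -/
def conjAction (Γ G : Type*) [Group Γ] [Group G] : MulAction G (Γ →* G) where
  smul g φ := ((MulAut.conj g).toMonoidHom.comp φ)
  one_smul φ := by
    ext x; show (MulAut.conj 1) (φ x) = φ x; simp
  mul_smul g h φ := by
    ext x; show (MulAut.conj (g * h)) (φ x) = (MulAut.conj g) ((MulAut.conj h) (φ x))
    simp [mul_assoc]

lemma finite_hom {Γ M : Type*} [Group Γ] [Group M] (h : Group.FG Γ) [Finite M] :
    Finite (Γ →* M) := by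
  obtain ⟨S, hS, hSfin⟩ := Group.fg_iff.mp h
  haveI := hSfin.to_subtype
  have hinj : Function.Injective (fun φ : Γ →* M => (fun s : S => φ s)) := by
    intro φ ψ hfg
    refine MonoidHom.eq_of_eqOn_dense hS ?_
    intro x hx
    exact congrFun hfg ⟨x, hx⟩
  exact Finite.of_injective _ hinj

lemma card_hom_comm {Γ : Type*} [Group Γ] (n : ℕ) (hab : Nonempty (Abelianization Γ ≃* Zg n))
    (K : Type*) [CommGroup K] : Nat.card (Γ →* K) = Nat.card K ^ n := by
  obtain ⟨e⟩ := hab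
  have e1 : (Γ →* K) ≃ (Abelianization Γ →* K) := Abelianization.lift
  have e2 : (Abelianization Γ →* K) ≃ (Zg n →* K) :=
    MulEquiv.monoidHomCongrLeftEquiv e
  have e3 : (Zg n →* K) ≃ ((Fin n → Multiplicative ℤ) →* K) :=
    MulEquiv.monoidHomCongrLeftEquiv (MulEquiv.funMultiplicative _ _)
  have e4 : ((Fin n → Multiplicative ℤ) →* K) ≃ (Fin n → (Multiplicative ℤ →* K)) :=
    (MonoidHom.noncommPiCoprodEquiv (M := K) (N := fun _ : Fin n => Multiplicative ℤ)).symm.trans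
      (Equiv.subtypeUnivEquiv (fun _ => fun _ _ _ _ _ => mul_comm _ _))
  have e5 : (Fin n → (Multiplicative ℤ →* K)) ≃ (Fin n → K) :=
    Equiv.piCongrRight fun _ => (zpowersHom K).symm
  rw [Nat.card_congr ((((e1.trans e2).trans e3).trans e4).trans e5), Nat.card_fun,
    Nat.card_eq_fintype_card (α := Fin n), Fintype.card_fin]

set_option maxRecDepth 100000 in
lemma a4_comm : ∀ σ a b : A4, σ ≠ 1 → σ * a = a * σ → σ * b = b * σ → a * b = b * a := by decide

set_option maxRecDepth 100000 in
lemma a4_centralizer_card : ∀ σ : A4, σ ≠ 1 →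
    Fintype.card {a : A4 // σ * a = a * σ} = (if σ ^ 2 = 1 then 4 else 3) := by decide

set_option maxRecDepth 100000 in
lemma a4_sq_count :
    ((Finset.univ.erase (1 : A4)).filter (fun σ => σ ^ 2 = 1)).card = 3 := by decide

set_option maxRecDepth 100000 in
lemma a4_nsq_count :
    ((Finset.univ.erase (1 : A4)).filter (fun σ => ¬ σ ^ 2 = 1)).card = 8 := by decide

set_option maxRecDepth 100000 in
lemma a4_card : Fintype.card A4 = 12 := by decide

theorem statement_8 (Γ : Type*) [Group Γ] (hΓ : Group.FG Γ) (g : ℕ) (hg : 1 ≤ g)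
    (hab : Nonempty (Abelianization Γ ≃* Zg g)) :
    (Nat.card (Γ →* A4) : ℤ) = 12 * (ks A4 Γ : ℤ) - 8 * 3 ^ g - 3 * 4 ^ g := by
  classical
  letI act : MulAction A4 (Γ →* A4) := conjAction Γ A4
  haveI hfin : Finite (Γ →* A4) := finite_hom hΓ
  letI : Fintype (Γ →* A4) := Fintype.ofFinite _
  letI : ∀ σ : A4, Fintype (MulAction.fixedBy (Γ →* A4) σ) := fun _ => Fintype.ofFinite _
  letI : Fintype (Quotient (MulAction.orbitRel A4 (Γ →* A4))) := Fintype.ofFinite _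
  -- Burnside's lemma
  have burnside := MulAction.sum_card_fixedBy_eq_card_orbits_mul_card_group
    (G := A4) (X := Γ →* A4)
  -- identify ks with the number of orbits
  have hsmul : ∀ (σ : A4) (φ : Γ →* A4) (x : Γ), (σ • φ) x = σ * φ x * σ⁻¹ := by
    intro σ φ x; rfl
  have hsetoid : homConj Γ A4 = MulAction.orbitRel A4 (Γ →* A4) := by
    apply Setoid.ext
    intro φ ψ
    show (∃ h : A4, ∀ x, ψ x = h * φ x * h⁻¹) ↔ φ ∈ MulAction.orbit A4 ψ
    constructor
    · rintro ⟨h, hh⟩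
      exact ⟨h⁻¹, MonoidHom.ext fun x => by rw [hsmul, hh x]; group⟩
    · rintro ⟨h, hh⟩
      exact ⟨h⁻¹, fun x => by rw [← hh, hsmul]; group⟩
  have hks : ks A4 Γ = Fintype.card (Quotient (MulAction.orbitRel A4 (Γ →* A4))) := by
    rw [← Nat.card_eq_fintype_card]
    show Nat.card (Quotient (homConj Γ A4)) = _
    rw [hsetoid]
  -- the fixed points of `1` are everything
  have h1 : Fintype.card (MulAction.fixedBy (Γ →* A4) (1 : A4)) = Nat.card (Γ →* A4) := by
    rw [← Nat.card_eq_fintype_card]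
    exact Nat.card_congr (Equiv.subtypeUnivEquiv fun φ => one_smul _ _)
  -- the fixed points of `σ ≠ 1`
  have hterm : ∀ σ : A4, σ ≠ 1 →
      Fintype.card (MulAction.fixedBy (Γ →* A4) σ) = (if σ ^ 2 = 1 then 4 else 3) ^ g := by
    intro σ hσ
    haveI hcommK : IsMulCommutative (Subgroup.centralizer {σ} : Subgroup A4) := by
      refine ⟨⟨fun a b => Subtype.ext ?_⟩⟩
      exact a4_comm σ a b hσ (Subgroup.mem_centralizer_singleton_iff.mp a.2).symm
        (Subgroup.mem_centralizer_singleton_iff.mp b.2).symm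
    have eFix : MulAction.fixedBy (Γ →* A4) σ ≃ (Γ →* (Subgroup.centralizer {σ} : Subgroup A4)) :=
      { toFun := fun φ => (φ : Γ →* A4).codRestrict _ (fun x => by
          rw [Subgroup.mem_centralizer_singleton_iff]
          have := DFunLike.congr_fun φ.2 x
          rw [hsmul] at this
          exact (mul_inv_eq_iff_eq_mul.mp this).symm)
        invFun := fun ψ => ⟨(Subgroup.subtype _).comp ψ, by
          show σ • ((Subgroup.subtype _).comp ψ) = (Subgroup.subtype _).comp ψ
          refine MonoidHom.ext fun x => ?_
          rw [hsmul]
          have := Subgroup.mem_centralizer_singleton_iff.mp (ψ x).2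
          simp only [MonoidHom.coe_comp, Function.comp_apply, Subgroup.coe_subtype]
          rw [mul_inv_eq_iff_eq_mul]
          exact this.symm⟩
        left_inv := fun φ => Subtype.ext (by ext x; rfl)
        right_inv := fun ψ => by ext x; rfl }
    have hcent : Nat.card (Subgroup.centralizer {σ} : Subgroup A4) =
        Fintype.card {a : A4 // σ * a = a * σ} := by
      rw [← Nat.card_eq_fintype_card]
      exact Nat.card_congr (Equiv.subtypeEquivRight fun a => by
        rw [Subgroup.mem_centralizer_singleton_iff]; constructor <;> exact fun h => h.symm)
    open scoped IsMulCommutative in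
    rw [← Nat.card_eq_fintype_card, Nat.card_congr eFix, card_hom_comm g hab, hcent,
      a4_centralizer_card σ hσ]
  -- compute the sum
  have hsum : (∑ σ : A4, Fintype.card (MulAction.fixedBy (Γ →* A4) σ)) =
      Nat.card (Γ →* A4) + (3 * 4 ^ g + 8 * 3 ^ g) := by
    rw [← Finset.add_sum_erase _ _ (Finset.mem_univ (1 : A4)), h1]
    congr 1
    rw [Finset.sum_congr rfl (fun σ hσ => hterm σ (Finset.ne_of_mem_erase hσ))]
    have : ∀ σ : A4, (if σ ^ 2 = 1 then 4 else 3) ^ g =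
        (if σ ^ 2 = 1 then 4 ^ g else 3 ^ g) := fun σ => apply_ite (· ^ g) _ _ _
    rw [Finset.sum_congr rfl (fun σ _ => this σ), Finset.sum_ite, Finset.sum_const,
      Finset.sum_const, a4_sq_count, a4_nsq_count, smul_eq_mul, smul_eq_mul]
  rw [hsum, ← hks, a4_card] at burnside
  have hZ := congrArg (Nat.cast : ℕ → ℤ) burnside
  push_cast at hZ
  linarith
end

section
/- Let Γ be a finitely generated group whose abelianization is a free abelian group of rank g ≥ 1. Then the number of homomorphisms from Γ to A5 satisfies |Hom(Γ, A5)| = 60·ks_{A5}(Γ) − 20·3^g − 15·4^g − 24·5^g. -/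
/-! ### Auxiliary material -/

section AuxGeneral

open MulAction Subgroup

variable {Γ G : Type*} [Group Γ] [Group G]

/-- The conjugation action of `G` on `Γ →* G`. -/
def conjHomAction (Γ G : Type*) [Group Γ] [Group G] : MulAction G (Γ →* G) where
  smul g φ := ((MulAut.conj g).toMonoidHom).comp φ
  one_smul φ := MonoidHom.ext fun x => by
    show (MulAut.conj 1) (φ x) = φ x; simp
  mul_smul g h φ := MonoidHom.ext fun x => by
    show (MulAut.conj (g * h)) (φ x) = (MulAut.conj g) ((MulAut.conj h) (φ x))
    simp [mul_assoc]

attribute [local instance] conjHomAction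

/-- Homs fixed by conjugation by `a` are homs into the centralizer of `a`. -/
def fixedByEquiv (a : G) :
    (fixedBy (Γ →* G) a) ≃ (Γ →* centralizer ({a} : Set G)) where
  toFun φ := MonoidHom.codRestrict φ.1 _ (fun x => by
    have h : a * φ.1 x * a⁻¹ = φ.1 x := DFunLike.congr_fun φ.2 x
    rw [Subgroup.mem_centralizer_singleton_iff]
    rw [mul_inv_eq_iff_eq_mul] at h
    exact h.symm)
  invFun ψ := ⟨(centralizer ({a} : Set G)).subtype.comp ψ, by
    ext x
    have h : (ψ x : G) * a = a * (ψ x : G) :=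
      Subgroup.mem_centralizer_singleton_iff.mp (ψ x).2
    show a * (ψ x : G) * a⁻¹ = (ψ x : G)
    rw [← h, mul_inv_cancel_right]⟩
  left_inv φ := by
    apply Subtype.ext; ext x; rfl
  right_inv ψ := by ext x; rfl

/-- Homs from a f.g. group to a finite group form a finite type. -/
lemma homFinite (h : Group.FG Γ) [Finite G] : Finite (Γ →* G) := by
  obtain ⟨S, hS, hfin⟩ := Group.fg_iff.mp h
  haveI := hfin.to_subtype
  apply Finite.of_injective (fun φ : Γ →* G => (fun s : S => φ s))
  intro φ ψ hfg
  exact MonoidHom.eq_of_eqOn_dense hS (fun x hx => congrFun hfg ⟨x, hx⟩)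

/-- Counting homs into a commutative group when the abelianization is free of rank `g`. -/
lemma homCard (g : ℕ) (e : Abelianization Γ ≃* Multiplicative (Fin g → ℤ))
    (C : Type*) [CommGroup C] : Nat.card (Γ →* C) = Nat.card C ^ g := by
  have e1 : (Γ →* C) ≃ (Abelianization Γ →* C) := Abelianization.lift
  have e2 : (Abelianization Γ →* C) ≃ (Multiplicative (Fin g → ℤ) →* C) :=
    MulEquiv.monoidHomCongrLeftEquiv e
  have e3 : (Multiplicative (Fin g → ℤ) →* C) ≃ ((Fin g → ℤ) →+ Additive C) :=
    MonoidHom.toAdditiveRight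
  have e4 : ((Fin g → ℤ) →+ Additive C) ≃ ((Fin g → ℤ) →ₗ[ℤ] Additive C) :=
    (addMonoidHomLequivInt ℤ).toEquiv
  have e5 : ((Fin g → ℤ) →ₗ[ℤ] Additive C) ≃ (Fin g → Additive C) :=
    ((Pi.basisFun ℤ (Fin g)).constr ℕ).toEquiv.symm
  rw [Nat.card_congr ((((e1.trans e2).trans e3).trans e4).trans e5), Nat.card_fun,
    Nat.card_congr Additive.ofMul.symm, Nat.card_eq_fintype_card (α := Fin g), Fintype.card_fin]

end AuxGeneral

/-! ### A5 specific computations -/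

namespace A5Aux

open Subgroup

/-- The number of elements of `A5` commuting with `a`. -/
def cc (a : A5) : ℕ := (Finset.univ.filter (fun h : A5 => a * h = h * a)).card

/-- The multiset of centralizer sizes in `A5`. -/
def theMultiset : Multiset ℕ :=
  60 ::ₘ (Multiset.replicate 20 3 + Multiset.replicate 15 4 + Multiset.replicate 24 5)

set_option maxHeartbeats 2000000 in
theorem hM : Finset.univ.val.map cc = theMultiset := by decide

set_option maxHeartbeats 1000000 in
theorem hcc1 : cc 1 = 60 := by decide

lemma count_aux (k : ℕ) :
    (Finset.univ.filter fun a : A5 => cc a = k).card = Multiset.count k theMultiset := by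
  rw [← hM, Multiset.count_map, Finset.card_def, Finset.filter_val]
  congr 1
  exact Multiset.filter_congr (fun x _ => eq_comm)

lemma ne_sixty {a : A5} (ha : a ≠ 1) : cc a ≠ 60 := by
  intro h
  have hsub : ({a, 1} : Finset A5) ⊆ Finset.univ.filter (fun x => cc x = 60) := by
    intro x hx
    rcases Finset.mem_insert.mp hx with rfl | hx
    · simp [h]
    · rw [Finset.mem_singleton] at hx; subst hx; simp [hcc1]
  have hle := Finset.card_le_card hsub
  rw [count_aux 60] at hle
  have h2 : ({a, 1} : Finset A5).card = 2 := by
    rw [Finset.card_insert_of_notMem (by simp [ha]), Finset.card_singleton]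
  have h1 : Multiset.count 60 theMultiset = 1 := by decide
  omega

lemma mem345 {a : A5} (ha : a ≠ 1) : cc a = 3 ∨ cc a = 4 ∨ cc a = 5 := by
  have hmem : cc a ∈ Finset.univ.val.map cc :=
    Multiset.mem_map_of_mem cc (Finset.mem_val.mpr (Finset.mem_univ a))
  rw [hM] at hmem
  simp only [theMultiset, Multiset.mem_cons, Multiset.mem_add, Multiset.mem_replicate] at hmem
  rcases hmem with h | (⟨_, h⟩ | ⟨_, h⟩) | ⟨_, h⟩
  · exact absurd h (ne_sixty ha)
  · exact Or.inl h
  · exact Or.inr (Or.inl h)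
  · exact Or.inr (Or.inr h)

lemma card_centralizer (a : A5) : Nat.card (centralizer ({a} : Set A5)) = cc a := by
  have e : centralizer ({a} : Set A5) ≃ {h : A5 // a * h = h * a} :=
    Equiv.subtypeEquivRight (fun x => by
      rw [Subgroup.mem_centralizer_singleton_iff]
      constructor <;> exact fun h => h.symm)
  rw [Nat.card_congr e, Nat.card_eq_fintype_card, Fintype.card_subtype]
  rfl

lemma centralizer_comm {a : A5} (h345 : cc a = 3 ∨ cc a = 4 ∨ cc a = 5) :
    ∀ x y : centralizer ({a} : Set A5), x * y = y * x := by
  have hc := card_centralizer a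
  rcases h345 with h | h | h
  · rw [h] at hc
    haveI : Fact (Nat.Prime 3) := ⟨by norm_num⟩
    haveI := isCyclic_of_prime_card (α := centralizer ({a} : Set A5)) hc
    exact fun x y => (IsCyclic.commGroup (α := centralizer ({a} : Set A5))).mul_comm x y
  · rw [h] at hc
    exact IsPGroup.commutative_of_card_eq_prime_sq (p := 2) (by rw [hc]; norm_num)
  · rw [h] at hc
    haveI : Fact (Nat.Prime 5) := ⟨by norm_num⟩
    haveI := isCyclic_of_prime_card (α := centralizer ({a} : Set A5)) hc
    exact fun x y => (IsCyclic.commGroup (α := centralizer ({a} : Set A5))).mul_comm x y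

lemma cardA5 : Fintype.card A5 = 60 := by
  show Fintype.card (alternatingGroup (Fin 5)) = 60
  have h2 := two_mul_card_alternatingGroup (α := Fin 5)
  rw [Fintype.card_perm, Fintype.card_fin] at h2
  have : Nat.factorial 5 = 120 := by decide
  omega

end A5Aux

/-! ### The main theorem -/

section Main

open MulAction Subgroup A5Aux

attribute [local instance] conjHomAction

theorem statement_9 (Γ : Type*) [Group Γ] (hΓ : Group.FG Γ) (g : ℕ) (hg : 1 ≤ g)
    (hab : Nonempty (Abelianization Γ ≃* Zg g)) :
    (Nat.card (Γ →* A5) : ℤ) =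
      60 * (ks A5 Γ : ℤ) - 20 * 3 ^ g - 15 * 4 ^ g - 24 * 5 ^ g := by
  classical
  obtain ⟨e⟩ := hab
  haveI hfin : Finite (Γ →* A5) := homFinite hΓ
  haveI : Fintype (Γ →* A5) := Fintype.ofFinite _
  haveI : ∀ a : A5, Fintype (fixedBy (Γ →* A5) a) := fun a => Fintype.ofFinite _
  haveI : Fintype (Quotient (orbitRel A5 (Γ →* A5))) := Fintype.ofFinite _
  have burn := MulAction.sum_card_fixedBy_eq_card_orbits_mul_card_group A5 (Γ →* A5)
  rw [cardA5] at burn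
  -- the quotient is the set of conjugacy classes of homs
  have hks : Fintype.card (Quotient (orbitRel A5 (Γ →* A5))) = ks A5 Γ := by
    rw [ks, ← Nat.card_eq_fintype_card]
    refine Nat.card_congr (Quotient.congrRight fun φ ψ => ?_)
    constructor
    · rintro ⟨g', hg'⟩
      refine ⟨g'⁻¹, fun x => ?_⟩
      rw [← hg']
      show ψ x = g'⁻¹ * (g' * ψ x * g'⁻¹) * g'⁻¹⁻¹
      group
    · rintro ⟨g', hg'⟩
      refine ⟨g'⁻¹, MonoidHom.ext fun x => ?_⟩
      show g'⁻¹ * ψ x * g'⁻¹⁻¹ = φ x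
      rw [hg' x]; group
  -- fixed points of the identity
  have hfix1 : Fintype.card (fixedBy (Γ →* A5) (1 : A5)) = Nat.card (Γ →* A5) := by
    rw [← Nat.card_eq_fintype_card]
    refine Nat.card_congr ((Equiv.setCongr ?_).trans (Equiv.Set.univ _))
    ext φ
    simp [MulAction.mem_fixedBy]
  -- fixed points of a nontrivial element
  have key : ∀ a : A5, a ≠ 1 → Fintype.card (fixedBy (Γ →* A5) a) = cc a ^ g := by
    intro a ha
    have h345 := mem345 ha
    letI : CommGroup (centralizer ({a} : Set A5)) :=
      { (inferInstance : Group (centralizer ({a} : Set A5))) with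
        mul_comm := centralizer_comm h345 }
    rw [← Nat.card_eq_fintype_card, Nat.card_congr (fixedByEquiv a), homCard g e _,
      card_centralizer]
  -- counts of centralizer sizes
  have hcount3 : (Finset.univ.filter fun a : A5 => cc a = 3).card = 20 := by
    rw [count_aux]; decide
  have hcount4 : (Finset.univ.filter fun a : A5 => cc a = 4).card = 15 := by
    rw [count_aux]; decide
  have hcount5 : (Finset.univ.filter fun a : A5 => cc a = 5).card = 24 := by
    rw [count_aux]; decide
  -- split the Burnside sum
  have hSsum : ∑ a ∈ Finset.univ.erase (1 : A5), cc a ^ g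
      = 20 * 3 ^ g + 15 * 4 ^ g + 24 * 5 ^ g := by
    have hne : ∀ k, k = 3 ∨ k = 4 ∨ k = 5 → ∀ a : A5, cc a = k → a ≠ 1 := by
      rintro k hk a hak rfl
      rw [hcc1] at hak
      omega
    have hU : Finset.univ.erase (1 : A5) =
        ((Finset.univ.filter fun a : A5 => cc a = 3) ∪
          (Finset.univ.filter fun a : A5 => cc a = 4)) ∪
          (Finset.univ.filter fun a : A5 => cc a = 5) := by
      ext a
      simp only [Finset.mem_erase, Finset.mem_univ, and_true, Finset.mem_union,
        Finset.mem_filter, true_and]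
      constructor
      · intro ha
        rcases mem345 ha with h | h | h
        exacts [Or.inl (Or.inl h), Or.inl (Or.inr h), Or.inr h]
      · rintro ((h | h) | h)
        exacts [hne 3 (by omega) a h, hne 4 (by omega) a h, hne 5 (by omega) a h]
    have d34 : Disjoint (Finset.univ.filter fun a : A5 => cc a = 3)
        (Finset.univ.filter fun a : A5 => cc a = 4) := by
      rw [Finset.disjoint_left]
      intro a ha hb
      rw [Finset.mem_filter] at ha hb
      omega
    have d345 : Disjoint ((Finset.univ.filter fun a : A5 => cc a = 3) ∪
        (Finset.univ.filter fun a : A5 => cc a = 4))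
        (Finset.univ.filter fun a : A5 => cc a = 5) := by
      rw [Finset.disjoint_left]
      intro a ha hb
      rw [Finset.mem_union, Finset.mem_filter, Finset.mem_filter] at ha
      rw [Finset.mem_filter] at hb
      omega
    have hsum3 : ∑ a ∈ (Finset.univ.filter fun a : A5 => cc a = 3), cc a ^ g
        = 20 * 3 ^ g := by
      rw [Finset.sum_congr rfl (fun a ha => by rw [(Finset.mem_filter.mp ha).2]),
        Finset.sum_const, hcount3, smul_eq_mul]
    have hsum4 : ∑ a ∈ (Finset.univ.filter fun a : A5 => cc a = 4), cc a ^ g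
        = 15 * 4 ^ g := by
      rw [Finset.sum_congr rfl (fun a ha => by rw [(Finset.mem_filter.mp ha).2]),
        Finset.sum_const, hcount4, smul_eq_mul]
    have hsum5 : ∑ a ∈ (Finset.univ.filter fun a : A5 => cc a = 5), cc a ^ g
        = 24 * 5 ^ g := by
      rw [Finset.sum_congr rfl (fun a ha => by rw [(Finset.mem_filter.mp ha).2]),
        Finset.sum_const, hcount5, smul_eq_mul]
    rw [hU, Finset.sum_union d345, Finset.sum_union d34, hsum3, hsum4, hsum5]
  have hsplit : ∑ a : A5, Fintype.card (fixedBy (Γ →* A5) a)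
      = Nat.card (Γ →* A5) + (20 * 3 ^ g + 15 * 4 ^ g + 24 * 5 ^ g) := by
    rw [← Finset.sum_erase_add _ _ (Finset.mem_univ (1 : A5)), hfix1,
      Finset.sum_congr rfl (fun a ha => key a (Finset.ne_of_mem_erase ha)), hSsum]
    omega
  have hN : Nat.card (Γ →* A5) + (20 * 3 ^ g + 15 * 4 ^ g + 24 * 5 ^ g) = ks A5 Γ * 60 := by
    rw [← hsplit, burn, hks]
  have := congrArg (Nat.cast : ℕ → ℤ) hN
  push_cast at this
  linarith

end Main
end

section
/- Let Γ be a group generated by two elements whose abelianization is infinite cyclic. Then ks_{A4}(Γ) = 4 or ks_{A4}(Γ) = 6. -/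
set_option maxRecDepth 100000

namespace KS10

def cyc : A4 := ⟨Equiv.swap 0 1 * Equiv.swap 1 2, by
  rw [Equiv.Perm.mem_alternatingGroup]; decide⟩

def pi3 (x : A4) : Multiplicative (ZMod 3) :=
  Multiplicative.ofAdd
    (if x * x = 1 then 0 else if (cyc⁻¹ * x) * (cyc⁻¹ * x) = 1 then (1 : ZMod 3) else 2)

lemma pi3_mul : ∀ x y : A4, pi3 (x * y) = pi3 x * pi3 y := by decide

def pi3M : A4 →* Multiplicative (ZMod 3) := MonoidHom.mk' pi3 pi3_mul

@[simp] lemma pi3M_apply (x : A4) : pi3M x = pi3 x := rfl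

def tauP : Equiv.Perm (Fin 4) := Equiv.swap 0 1

def sigmaA : A4 →* A4 where
  toFun x := ⟨tauP * x.1 * tauP⁻¹, by
    rw [Equiv.Perm.mem_alternatingGroup]
    have hx := Equiv.Perm.mem_alternatingGroup.mp x.2
    simp [tauP, hx]⟩
  map_one' := by ext1; simp
  map_mul' x y := by ext1; simp

lemma sigmaA_inj : Function.Injective sigmaA := by decide

set_option synthInstance.maxSize 2048 in
set_option synthInstance.maxHeartbeats 4000000 in
set_option maxHeartbeats 4000000 in
lemma factF1 : ∀ x y x' y' : A4, x * y ≠ y * x → x' * y' ≠ y' * x' →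
    pi3 x = pi3 x' → pi3 y = pi3 y' →
    ∃ g : A4, x' = g * x * g⁻¹ ∧ y' = g * y * g⁻¹ := by decide

lemma fact_ker : ∀ x : A4, pi3 x = 1 → x * x = 1 := by decide

lemma fact_ord2 : ∀ x y : A4, x * x = 1 → y * y = 1 → x * y = y * x := by decide

lemma fact_sigma_pi : ∀ x : A4, pi3 (sigmaA x) = (pi3 x)⁻¹ := by decide

lemma fact_z3 : ∀ u v w : Multiplicative (ZMod 3),
    u ≠ 1 → v ≠ 1 → w ≠ 1 → u ≠ w → v ≠ w → u = v := by decide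

lemma fact_z3inv : ∀ z : Multiplicative (ZMod 3), z ≠ 1 → z⁻¹ ≠ z := by decide

def conjSetoid : Setoid A4 where
  r x y := ∃ g : A4, y = g * x * g⁻¹
  iseqv := by
    refine ⟨fun x => ⟨1, by group⟩, ?_, ?_⟩
    · rintro x y ⟨g, rfl⟩; exact ⟨g⁻¹, by group⟩
    · rintro x y z ⟨g, rfl⟩ ⟨h, rfl⟩; exact ⟨h * g, by group⟩

instance : Fintype (Quotient conjSetoid) :=
  @Quotient.fintype A4 _ conjSetoid
    (fun x y => decidable_of_iff (∃ g : A4, y = g * x * g⁻¹) Iff.rfl)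

lemma card_conjSetoid : Fintype.card (Quotient conjSetoid) = 4 := by decide

/-- Splitting a quotient along an invariant predicate. -/
noncomputable def quotSplit {α : Type*} (s : Setoid α) (P : α → Prop)
    (hP : ∀ {x y}, s.r x y → P x → P y) :
    Quotient s ≃
      Quotient (Setoid.comap (Subtype.val : {x // P x} → α) s) ⊕
      Quotient (Setoid.comap (Subtype.val : {x // ¬ P x} → α) s) := by
  classical
  refine
    { toFun := Quotient.lift
        (fun x => if h : P x then Sum.inl (Quotient.mk _ ⟨x, h⟩)
          else Sum.inr (Quotient.mk _ ⟨x, h⟩)) ?_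
      invFun := Sum.elim
        (Quotient.lift (fun x => Quotient.mk s x.1) fun u v h => Quotient.sound h)
        (Quotient.lift (fun x => Quotient.mk s x.1) fun u v h => Quotient.sound h)
      left_inv := ?_
      right_inv := ?_ }
  · intro x y hxy
    by_cases hx : P x
    · have hy : P y := hP hxy hx
      simp only [dif_pos hx, dif_pos hy]
      exact congrArg Sum.inl (Quotient.sound hxy)
    · have hy : ¬ P y := fun hy => hx (hP (s.symm hxy) hy)
      simp only [dif_neg hx, dif_neg hy]
      exact congrArg Sum.inr (Quotient.sound hxy)
  · refine fun q => Quotient.inductionOn q fun x => ?_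
    by_cases hx : P x <;> simp [hx]
  · rintro (q | q) <;> refine Quotient.inductionOn q fun x => ?_
    · have := x.2; simp [this]
    · have := x.2; simp [this]

lemma closure_pair_comm {G : Type*} [Group G] {x y : G} (h : x * y = y * x)
    {u v : G} (hu : u ∈ Subgroup.closure ({x, y} : Set G))
    (hv : v ∈ Subgroup.closure ({x, y} : Set G)) : u * v = v * u := by
  induction hu, hv using Subgroup.closure_induction₂ with
  | mem a b ha hb =>
    rcases ha with rfl | ha <;> rcases hb with rfl | hb
    · rfl
    · rcases hb with rfl; exact h
    · rcases ha with rfl; exact h.symm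
    · rcases ha with rfl; rcases hb with rfl; rfl
  | one_left a ha => simp
  | one_right a ha => simp
  | mul_left a b c ha hb hc h1 h2 =>
    exact (Commute.mul_left (h1 : Commute a c) (h2 : Commute b c))
  | mul_right a b c ha hb hc h1 h2 =>
    exact (Commute.mul_right (h1 : Commute c a) (h2 : Commute c b))
  | inv_left a b ha hb h1 => exact (Commute.inv_left (h1 : Commute a b))
  | inv_right a b ha hb h1 => exact (Commute.inv_right (h1 : Commute a b))

lemma hom_ext_pair {Γ G : Type*} [Group Γ] [Group G] {a b : Γ}
    (hgen : Subgroup.closure ({a, b} : Set Γ) = ⊤) {φ ψ : Γ →* G}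
    (ha : φ a = ψ a) (hb : φ b = ψ b) : φ = ψ := by
  ext γ
  have hγ : γ ∈ Subgroup.closure ({a, b} : Set Γ) := hgen ▸ Subgroup.mem_top γ
  induction hγ using Subgroup.closure_induction with
  | mem z hz => rcases hz with rfl | hz; · exact ha
                rcases hz with rfl; exact hb
  | one => simp
  | mul u v hu hv h1 h2 => simp [map_mul, h1, h2]
  | inv u hu h1 => simp [map_inv, h1]

lemma factor_comm {Γ : Type*} [Group Γ] {A : Type*} [CommGroup A]
    (e : Abelianization Γ ≃* Multiplicative ℤ) (t : Γ)
    (ht : e (Abelianization.of t) = Multiplicative.ofAdd 1)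
    (h : Γ →* A) (γ : Γ) :
    h γ = h t ^ (Multiplicative.toAdd (e (Abelianization.of γ))) := by
  set L : Multiplicative ℤ →* A :=
    (Abelianization.lift h).comp e.symm.toMonoidHom with hL
  have key : ∀ δ : Γ, h δ = L (e (Abelianization.of δ)) := by
    intro δ
    simp [hL, MonoidHom.comp_apply, Abelianization.lift_apply_of]
  have hz : ∀ z : Multiplicative ℤ,
      (Multiplicative.ofAdd (1 : ℤ)) ^ (Multiplicative.toAdd z) = z := by
    intro z
    rw [← ofAdd_zsmul, smul_eq_mul, mul_one, ofAdd_toAdd]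
  calc h γ = L (e (Abelianization.of γ)) := key γ
    _ = L ((Multiplicative.ofAdd (1:ℤ)) ^ (Multiplicative.toAdd (e (Abelianization.of γ)))) := by
        rw [hz]
    _ = (L (Multiplicative.ofAdd (1:ℤ))) ^ (Multiplicative.toAdd (e (Abelianization.of γ))) := by
        rw [map_zpow]
    _ = h t ^ (Multiplicative.toAdd (e (Abelianization.of γ))) := by rw [← ht, ← key t]

end KS10

open KS10 in
theorem statement_10 (Γ : Type*) [Group Γ]
    (hgen : ∃ a b : Γ, Subgroup.closure {a, b} = (⊤ : Subgroup Γ))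
    (hab : Nonempty (Abelianization Γ ≃* Multiplicative ℤ)) :
    ks A4 Γ = 4 ∨ ks A4 Γ = 6 := by
  classical
  obtain ⟨a, b, hgen⟩ := hgen
  obtain ⟨e⟩ := hab
  obtain ⟨t, ht0⟩ := QuotientGroup.mk_surjective (e.symm (Multiplicative.ofAdd (1:ℤ)))
  have ht : e (Abelianization.of t) = Multiplicative.ofAdd 1 := by
    rw [show (Abelianization.of t : Abelianization Γ) = QuotientGroup.mk t from rfl, ht0,
      MulEquiv.apply_symm_apply]
  set n : Γ → ℤ := fun γ => Multiplicative.toAdd (e (Abelianization.of γ)) with hn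
  -- π₃ factorization for arbitrary homomorphisms
  have piFact : ∀ (φ : Γ →* A4) (γ : Γ), pi3 (φ γ) = (pi3 (φ t)) ^ (n γ) := by
    intro φ γ
    have := factor_comm e t ht (pi3M.comp φ) γ
    simpa using this
  -- full factorization for homomorphisms with commuting generator images
  have commFact : ∀ (φ : Γ →* A4), φ a * φ b = φ b * φ a → ∀ γ, φ γ = (φ t) ^ (n γ) := by
    intro φ hc γ
    have hrange : φ.range = Subgroup.closure ({φ a, φ b} : Set A4) := by
      rw [MonoidHom.range_eq_map, ← hgen, MonoidHom.map_closure, Set.image_pair]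
    haveI : IsMulCommutative φ.range := by
      refine ⟨⟨fun u v => ?_⟩⟩
      apply Subtype.ext
      have hu : (u : A4) ∈ Subgroup.closure ({φ a, φ b} : Set A4) := by
        rw [← hrange]; exact u.2
      have hv : (v : A4) ∈ Subgroup.closure ({φ a, φ b} : Set A4) := by
        rw [← hrange]; exact v.2
      rw [Subgroup.coe_mul, Subgroup.coe_mul]
      exact closure_pair_comm hc hu hv
    have h2 := open scoped IsMulCommutative in congrArg Subtype.val (factor_comm e t ht φ.rangeRestrict γ)
    simpa [MonoidHom.coe_rangeRestrict] using h2
  set P : (Γ →* A4) → Prop := fun φ => φ a * φ b = φ b * φ a with hP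
  have hPinv : ∀ {φ ψ : Γ →* A4}, (homConj Γ A4).r φ ψ → P φ → P ψ := by
    rintro φ ψ ⟨g, hg⟩ hφ
    show ψ a * ψ b = ψ b * ψ a
    rw [hg a, hg b]
    have e1 : (g * φ a * g⁻¹) * (g * φ b * g⁻¹) = g * (φ a * φ b) * g⁻¹ := by group
    have e2 : (g * φ b * g⁻¹) * (g * φ a * g⁻¹) = g * (φ b * φ a) * g⁻¹ := by group
    rw [e1, e2, hφ]
  set s1 := Setoid.comap (Subtype.val : {φ : Γ →* A4 // P φ} → (Γ →* A4)) (homConj Γ A4) with hs1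
  set s2 := Setoid.comap (Subtype.val : {φ : Γ →* A4 // ¬ P φ} → (Γ →* A4)) (homConj Γ A4)
    with hs2
  -- finiteness
  haveI hfinHom : Finite (Γ →* A4) := by
    apply Finite.of_injective (fun φ : Γ →* A4 => (φ a, φ b))
    intro φ ψ h
    exact hom_ext_pair hgen (congrArg Prod.fst h) (congrArg Prod.snd h)
  -- the commuting part has exactly 4 classes
  have hcard1 : Nat.card (Quotient s1) = 4 := by
    have E4 : Quotient s1 ≃ Quotient conjSetoid := by
      refine Quotient.congr
        { toFun := fun φ => φ.1 t
          invFun := fun x => ⟨(zpowersHom A4 x).comp (e.toMonoidHom.comp Abelianization.of), by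
            simp only [hP, MonoidHom.comp_apply, zpowersHom_apply]
            exact zpow_mul_comm x _ _⟩
          left_inv := fun φ => by
            apply Subtype.ext
            apply hom_ext_pair hgen
            · show (φ.1 t) ^ (n a) = φ.1 a
              exact (commFact φ.1 φ.2 a).symm
            · show (φ.1 t) ^ (n b) = φ.1 b
              exact (commFact φ.1 φ.2 b).symm
          right_inv := fun x => by
            show x ^ (Multiplicative.toAdd (e (Abelianization.of t))) = x
            rw [ht]; simp }
        ?_
      intro φ ψ
      constructor
      · rintro ⟨g, hg⟩; exact ⟨g, hg t⟩
      · rintro ⟨g, hg⟩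
        refine ⟨g, fun γ => ?_⟩
        have hg' : ψ.1 t = g * φ.1 t * g⁻¹ := hg
        rw [commFact ψ.1 ψ.2 γ, commFact φ.1 φ.2 γ, hg', conj_zpow]
    rw [Nat.card_congr E4, Nat.card_eq_fintype_card, card_conjSetoid]
  -- the noncommuting part has 0 or 2 classes
  have hcard2 : Nat.card (Quotient s2) = 0 ∨ Nat.card (Quotient s2) = 2 := by
    by_cases hne : Nonempty {φ : Γ →* A4 // ¬ P φ}
    · right
      obtain ⟨⟨φ₀, hφ₀⟩⟩ := hne
      have hc0 : ∀ (φ : Γ →* A4), ¬ P φ → pi3 (φ t) ≠ 1 := by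
        intro φ hφ h1
        apply hφ
        have ha2 : φ a * φ a = 1 := fact_ker _ (by rw [piFact φ a, h1, one_zpow])
        have hb2 : φ b * φ b = 1 := fact_ker _ (by rw [piFact φ b, h1, one_zpow])
        exact fact_ord2 _ _ ha2 hb2
      have conj_of_pi : ∀ (φ ψ : {φ : Γ →* A4 // ¬ P φ}),
          pi3 (φ.1 t) = pi3 (ψ.1 t) → s2.r φ ψ := by
        intro φ ψ hpi
        obtain ⟨g, hga, hgb⟩ := factF1 (φ.1 a) (φ.1 b) (ψ.1 a) (ψ.1 b) φ.2 ψ.2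
          (by rw [piFact φ.1 a, piFact ψ.1 a, hpi]) (by rw [piFact φ.1 b, piFact ψ.1 b, hpi])
        refine ⟨g, fun γ => ?_⟩
        have heq : (MulAut.conj g).toMonoidHom.comp φ.1 = ψ.1 := by
          apply hom_ext_pair hgen
          · simpa [MulAut.conj_apply] using hga.symm
          · simpa [MulAut.conj_apply] using hgb.symm
        have := congrFun (congrArg (fun f : Γ →* A4 => (f : Γ → A4)) heq) γ
        simpa [MulAut.conj_apply] using this.symm
      -- the invariant
      have hBinv : ∀ (φ ψ : {φ : Γ →* A4 // ¬ P φ}), s2.r φ ψ →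
          pi3 (φ.1 t) = pi3 (ψ.1 t) := by
        rintro φ ψ ⟨g, hg⟩
        rw [hg t, show g * φ.1 t * g⁻¹ = g * (φ.1 t) * g⁻¹ from rfl]
        rw [← pi3M_apply, ← pi3M_apply, map_mul, map_mul, map_inv]
        rw [mul_comm (pi3M g) (pi3M (φ.1 t)), mul_assoc, mul_inv_cancel, mul_one]
      set B : Quotient s2 → Bool :=
        Quotient.lift (fun φ : {φ : Γ →* A4 // ¬ P φ} => decide (pi3 (φ.1 t) = pi3 (φ₀ t)))
          (fun φ ψ h => by simp only [hBinv φ ψ h]) with hB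
      -- σ ∘ φ₀
      have hσ : ¬ P (sigmaA.comp φ₀) := by
        intro hcomm
        apply hφ₀
        show φ₀ a * φ₀ b = φ₀ b * φ₀ a
        apply sigmaA_inj
        rw [map_mul, map_mul]
        exact hcomm
      have hσt : pi3 ((sigmaA.comp φ₀) t) ≠ pi3 (φ₀ t) := by
        show pi3 (sigmaA (φ₀ t)) ≠ pi3 (φ₀ t)
        rw [fact_sigma_pi]
        exact fact_z3inv _ (hc0 φ₀ hφ₀)
      have hBbij : Function.Bijective B := by
        constructor
        · intro q q'
          refine Quotient.inductionOn₂ q q' fun φ ψ h => ?_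
          apply Quotient.sound
          apply conj_of_pi
          have h' := decide_eq_decide.mp h
          by_cases h1 : pi3 (φ.1 t) = pi3 (φ₀ t)
          · rw [h1, (h'.mp h1).symm]
          · have h2 : pi3 (ψ.1 t) ≠ pi3 (φ₀ t) := fun hh => h1 (h'.mpr hh)
            exact fact_z3 _ _ _ (hc0 φ.1 φ.2) (hc0 ψ.1 ψ.2) (hc0 φ₀ hφ₀) h1 h2
        · intro c
          cases c
          · exact ⟨Quotient.mk _ ⟨sigmaA.comp φ₀, hσ⟩, by
              simpa [hB, decide_eq_false_iff_not] using hσt⟩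
          · exact ⟨Quotient.mk _ ⟨φ₀, hφ₀⟩, by simp [hB]⟩
      rw [Nat.card_congr (Equiv.ofBijective B hBbij)]
      simp
    · left
      haveI : IsEmpty {φ : Γ →* A4 // ¬ P φ} := not_nonempty_iff.mp hne
      haveI : IsEmpty (Quotient s2) :=
        ⟨fun q => Quotient.inductionOn q fun x => isEmptyElim x⟩
      exact Nat.card_of_isEmpty
  -- assemble
  have hks : ks A4 Γ = Nat.card (Quotient s1) + Nat.card (Quotient s2) := by
    rw [ks, Nat.card_congr (quotSplit (homConj Γ A4) P hPinv), Nat.card_sum]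
  rcases hcard2 with h | h
  · left; rw [hks, hcard1, h]
  · right; rw [hks, hcard1, h]
end

section
/- Let Γ be a group generated by two elements whose abelianization is infinite cyclic. Then every non-surjective homomorphism Γ → A4 has abelian image, the number of conjugacy classes of non-surjective homomorphisms Γ → A4 equals 4, and the number of conjugacy classes of surjective homomorphisms Γ → A4 is 0 or 2. -/
/-! ### Auxiliary material for `statement_11` -/

namespace St11Aux

/-- An explicit description of the abelianization map `A4 → ZMod 3` (a permutation in `A4`
is determined by the images of `0` and `1`). -/
def pf (x : A4) : ZMod 3 :=
  match x.val 0, x.val 1 with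
  | 0, 1 => 0 | 0, 2 => 2 | 0, 3 => 1
  | 1, 0 => 0 | 1, 2 => 1 | 1, 3 => 2
  | 2, 0 => 2 | 2, 1 => 1 | 2, 3 => 0
  | 3, 0 => 1 | 3, 1 => 2 | 3, 2 => 0
  | _, _ => 0

def τ4 : Equiv.Perm (Fin 4) := Equiv.swap 0 1

/-- Conjugation by the transposition `(0 1)`, as a function `A4 → A4`. -/
def σf (x : A4) : A4 := ⟨τ4 * x.val * τ4, by
  have hx := Equiv.Perm.mem_alternatingGroup.mp x.2
  rw [Equiv.Perm.mem_alternatingGroup]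
  simp [τ4, hx]⟩

lemma τ4_mul_self : τ4 * τ4 = 1 := Equiv.swap_mul_self 0 1

/-- Conjugation by the transposition `(0 1)`, as a monoid hom `A4 →* A4`. -/
def σh : A4 →* A4 where
  toFun := σf
  map_one' := Subtype.ext (by
    show τ4 * 1 * τ4 = 1
    rw [mul_one, τ4_mul_self])
  map_mul' x y := Subtype.ext (by
    show τ4 * (x.val * y.val) * τ4 = (τ4 * x.val * τ4) * (τ4 * y.val * τ4)
    have h := τ4_mul_self
    calc τ4 * (x.val * y.val) * τ4 = τ4 * x.val * (τ4 * τ4) * y.val * τ4 := by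
          rw [h]; group
      _ = (τ4 * x.val * τ4) * (τ4 * y.val * τ4) := by group)

lemma σf_σf : ∀ x : A4, σf (σf x) = x := by decide

lemma σh_surj : Function.Surjective ⇑σh := fun y => ⟨σf y, σf_σf y⟩

lemma A4_nonabelian : ∃ x y : A4, x * y ≠ y * x := by decide

lemma A4_sq_card : (Finset.univ.image (fun x : A4 => x * x)).card = 9 := by decide

lemma A4_card : Nat.card A4 = 12 := by
  rw [Nat.card_eq_fintype_card]; decide

lemma A4_order3 : ∀ s t : A4, s * t ≠ t * s →
    (s ≠ 1 ∧ s * s * s = 1) ∨ (t ≠ 1 ∧ t * t * t = 1) := by decide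

lemma pf_mul : ∀ x y : A4, pf (x * y) = pf x + pf y := by decide

lemma pf_one : pf 1 = 0 := by decide

/-- The abelianization map `A4 →* Multiplicative (ZMod 3)`. -/
def pA : A4 →* Multiplicative (ZMod 3) where
  toFun x := Multiplicative.ofAdd (pf x)
  map_one' := by show Multiplicative.ofAdd (pf 1) = 1; rw [pf_one]; rfl
  map_mul' x y := by
    show Multiplicative.ofAdd (pf (x * y)) = Multiplicative.ofAdd (pf x) * Multiplicative.ofAdd (pf y)
    rw [pf_mul]; rfl

lemma σh_ne : ∀ g : A4, ∃ c : A4, σf c ≠ g * c * g⁻¹ := by decide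

set_option maxHeartbeats 4000000 in
set_option maxRecDepth 10000 in
/-- The key finite computation: if two generating pairs of `A4` have proportional
abelianized coordinates, then they differ by an automorphism of `A4`, which is either
inner or inner twisted by conjugation by `(0 1)`. -/
lemma L2 : ∀ s1 s2 t1 t2 : A4, s1 * s2 ≠ s2 * s1 → t1 * t2 ≠ t2 * t1 →
    pf s1 * pf t2 = pf s2 * pf t1 →
    ∃ g : A4, (t1 = g * s1 * g⁻¹ ∧ t2 = g * s2 * g⁻¹) ∨
      (t1 = g * (σf s1) * g⁻¹ ∧ t2 = g * (σf s2) * g⁻¹) := by decide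

/-- The conjugation setoid on `A4` itself. -/
def R : Setoid A4 where
  r c d := ∃ g : A4, d = g * c * g⁻¹
  iseqv := by
    refine ⟨fun c => ⟨1, by simp⟩, ?_, ?_⟩
    · rintro c d ⟨g, rfl⟩; exact ⟨g⁻¹, by group⟩
    · rintro c d f ⟨g, rfl⟩ ⟨h, rfl⟩; exact ⟨h * g, by group⟩

def dR : DecidableRel R.r := fun c d =>
  decidable_of_iff (∃ g : A4, d = g * c * g⁻¹) Iff.rfl

instance : Fintype (Quotient R) := @Quotient.fintype A4 _ R dR

lemma cardQR : Nat.card (Quotient R) = 4 := by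
  rw [Nat.card_eq_fintype_card]; decide

/-- Elements of the closure of a pair of commuting elements commute. -/
lemma comm_closure {G : Type*} [Group G] {s t : G} (hst : s * t = t * s)
    {x y : G} (hx : x ∈ Subgroup.closure {s, t}) (hy : y ∈ Subgroup.closure {s, t}) :
    x * y = y * x := by
  have hsub : ({s, t} : Set G) ⊆ ↑(Subgroup.centralizer {s, t}) := by
    intro g hg
    rw [SetLike.mem_coe, Subgroup.mem_centralizer_iff]
    intro h hh
    simp only [Set.mem_insert_iff, Set.mem_singleton_iff] at hg hh
    rcases hg with rfl | rfl <;> rcases hh with rfl | rfl <;>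
      first | rfl | exact hst | exact hst.symm
  have hy' : y ∈ Subgroup.centralizer {s, t} := (Subgroup.closure_le _).mpr hsub hy
  rw [Subgroup.mem_centralizer_iff] at hy'
  have hsub2 : ({s, t} : Set G) ⊆ ↑(Subgroup.centralizer {y}) := by
    intro g hg
    rw [SetLike.mem_coe, Subgroup.mem_centralizer_iff]
    intro h hh
    simp only [Set.mem_singleton_iff] at hh
    subst hh
    exact (hy' g hg).symm
  have hx' : x ∈ Subgroup.centralizer {y} := (Subgroup.closure_le _).mpr hsub2 hx
  rw [Subgroup.mem_centralizer_iff] at hx'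
  exact (hx' y (Set.mem_singleton y)).symm

/-- `A4` has no subgroup of order 6. -/
lemma A4_no_subgroup_6 (H : Subgroup A4) : Nat.card H ≠ 6 := by
  intro h6
  have hidx : H.index = 2 := by
    have h := H.card_mul_index
    rw [h6, A4_card] at h
    omega
  have hsq : ∀ x : A4, x * x ∈ H := fun x => Subgroup.mul_self_mem_of_index_two hidx x
  have hsub : ((Finset.univ.image (fun x : A4 => x * x) : Finset A4) : Set A4) ⊆ (H : Set A4) := by
    intro y hy
    simp only [Finset.coe_image, Finset.coe_univ, Set.image_univ, Set.mem_range] at hy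
    obtain ⟨x, rfl⟩ := hy
    exact hsq x
  have h9 : (9 : ℕ) ≤ Nat.card H := by
    calc (9 : ℕ) = (Finset.univ.image (fun x : A4 => x * x)).card := A4_sq_card.symm
      _ = ((Finset.univ.image (fun x : A4 => x * x) : Finset A4) : Set A4).ncard :=
          (Set.ncard_coe_finset _).symm
      _ ≤ (H : Set A4).ncard := Set.ncard_le_ncard hsub (Set.toFinite _)
      _ = Nat.card H := (Nat.card_coe_set_eq _).symm
  omega

/-- Any two non-commuting elements generate `A4`. -/
lemma A4_gen_of_noncomm {s t : A4} (h : s * t ≠ t * s) :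
    Subgroup.closure ({s, t} : Set A4) = ⊤ := by
  set H := Subgroup.closure ({s, t} : Set A4) with hH
  have hs : s ∈ H := Subgroup.subset_closure (by simp)
  have ht : t ∈ H := Subgroup.subset_closure (by simp)
  have hdvd : Nat.card H ∣ 12 := A4_card ▸ Subgroup.card_subgroup_dvd_card H
  have hfact : Fact (Nat.Prime 3) := ⟨Nat.prime_three⟩
  have h3 : (3 : ℕ) ∣ Nat.card H := by
    have horder : ∀ u : A4, u ∈ H → u ≠ 1 → u * u * u = 1 → (3 : ℕ) ∣ Nat.card H := by
      intro u hu hne hcube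
      have hcube' : u ^ 3 = 1 := by
        rw [pow_succ, pow_succ, pow_one]; exact hcube
      have ho : orderOf u = 3 := orderOf_eq_prime hcube' hne
      calc (3 : ℕ) = Nat.card (Subgroup.zpowers u) := by rw [Nat.card_zpowers, ho]
        _ ∣ Nat.card H := Subgroup.card_dvd_of_le (Subgroup.zpowers_le.mpr hu)
    rcases A4_order3 s t h with ⟨hne, hcube⟩ | ⟨hne, hcube⟩
    · exact horder s hs hne hcube
    · exact horder t ht hne hcube
  have h6 := A4_no_subgroup_6 H
  have h3' : Nat.card H ≠ 3 := by
    intro h3c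
    have hc : IsCyclic H := isCyclic_of_prime_card h3c
    obtain ⟨g, hg⟩ := hc.exists_generator
    obtain ⟨i, hi⟩ := hg ⟨s, hs⟩
    obtain ⟨j, hj⟩ := hg ⟨t, ht⟩
    apply h
    have hcomm : (g ^ i) * (g ^ j) = (g ^ j) * (g ^ i) := by
      rw [← zpow_add, ← zpow_add, add_comm]
    have : ((⟨s, hs⟩ : H) * ⟨t, ht⟩ : H) = (⟨t, ht⟩ : H) * ⟨s, hs⟩ := by
      rw [← hi, ← hj, hcomm]
    exact congrArg Subtype.val this
  have hpos : 0 < Nat.card H := Nat.card_pos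
  have hle : Nat.card H ≤ 12 := Nat.le_of_dvd (by norm_num) hdvd
  have hcard : Nat.card H = 12 := by
    set n := Nat.card H with hn
    clear_value n
    interval_cases n <;> omega
  have : H = ⊤ := Subgroup.eq_top_of_card_eq H (by rw [hcard, A4_card])
  exact this

/-- Conjugacy of homomorphisms can be checked on generators. -/
lemma conj_all {Γ : Type*} [Group Γ] {a b : Γ} (hgen : Subgroup.closure ({a, b} : Set Γ) = ⊤)
    {G : Type*} [Group G] (φ ψ : Γ →* G) (g : G)
    (ha : ψ a = g * φ a * g⁻¹) (hb : ψ b = g * φ b * g⁻¹) : ∀ x, ψ x = g * φ x * g⁻¹ := by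
  have hsub : Subgroup.closure ({a, b} : Set Γ) ≤
      { carrier := {x | ψ x = g * φ x * g⁻¹}
        one_mem' := by simp
        mul_mem' := by
          intro x y hx hy
          simp only [Set.mem_setOf_eq, map_mul] at *
          rw [hx, hy]; group
        inv_mem' := by
          intro x hx
          simp only [Set.mem_setOf_eq, map_inv] at *
          rw [hx]; group } := by
    rw [Subgroup.closure_le]
    intro x hx
    simp only [Set.mem_insert_iff, Set.mem_singleton_iff] at hx
    rcases hx with rfl | rfl
    · exact ha
    · exact hb
  intro x
  exact hsub (hgen ▸ Subgroup.mem_top x)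

end St11Aux

open St11Aux in
theorem statement_11 (Γ : Type*) [Group Γ]
    (hgen : ∃ a b : Γ, Subgroup.closure {a, b} = (⊤ : Subgroup Γ))
    (hab : Nonempty (Abelianization Γ ≃* Multiplicative ℤ)) :
    (∀ φ : Γ →* A4, ¬Function.Surjective φ → ∀ x y : Γ, φ x * φ y = φ y * φ x) ∧
    ksRestrict A4 Γ (fun φ => ¬Function.Surjective φ) = 4 ∧
    (ksRestrict A4 Γ (fun φ => Function.Surjective φ) = 0 ∨
      ksRestrict A4 Γ (fun φ => Function.Surjective φ) = 2) := by
  obtain ⟨a, b, hgen⟩ := hgen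
  obtain ⟨e⟩ := hab
  set α : Γ →* Multiplicative ℤ := e.toMonoidHom.comp Abelianization.of with hαdef
  have hαsurj : Function.Surjective ⇑α := by
    have h1 : Function.Surjective ⇑(Abelianization.of (G := Γ)) :=
      fun y => QuotientGroup.mk_surjective y
    exact e.surjective.comp h1
  obtain ⟨x0, hx0⟩ := hαsurj (Multiplicative.ofAdd 1)
  -- every homomorphism with commuting image kills the kernel of α
  have hker : ∀ (C : Type) [Group C] (f : Γ →* C), (∀ g h : Γ, f g * f h = f h * f g) →
      ∀ x : Γ, α x = 1 → f x = 1 := by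
    intro C _ f hcomm x hx
    have h1 : Abelianization.of (G := Γ) x = 1 := by
      apply e.injective
      rw [map_one]
      exact hx
    have h2 : x ∈ commutator Γ := by
      exact (QuotientGroup.eq_one_iff x).mp h1
    have h3 : commutator Γ ≤ f.ker := by
      rw [commutator_eq_closure, Subgroup.closure_le]
      rintro y ⟨g, h', rfl⟩
      rw [SetLike.mem_coe, MonoidHom.mem_ker, map_commutatorElement]
      exact commutatorElement_eq_one_iff_commute.mpr (hcomm g h')
    exact MonoidHom.mem_ker.mp (h3 h2)
  -- key identity: such homomorphisms are powers of their value at x0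
  have key : ∀ (C : Type) [Group C] (f : Γ →* C), (∀ g h : Γ, f g * f h = f h * f g) →
      ∀ x : Γ, f x = f x0 ^ (Multiplicative.toAdd (α x)) := by
    intro C _ f hcomm x
    have hone : α (x * (x0 ^ (Multiplicative.toAdd (α x)))⁻¹) = 1 := by
      rw [map_mul, map_inv, map_zpow, hx0]
      have : Multiplicative.ofAdd (1 : ℤ) ^ (Multiplicative.toAdd (α x)) = α x := by
        rw [← ofAdd_zsmul, smul_eq_mul, mul_one, ofAdd_toAdd]
      rw [this, mul_inv_cancel]
    have hfx := hker C f hcomm _ hone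
    rw [map_mul, map_inv, mul_inv_eq_one] at hfx
    rw [hfx, map_zpow]
  have hrange : ∀ φ : Γ →* A4, φ.range = Subgroup.closure {φ a, φ b} := by
    intro φ
    rw [MonoidHom.range_eq_map, ← hgen, MonoidHom.map_closure]
    congr 1
    rw [Set.image_insert_eq, Set.image_singleton]
  have hmemrange : ∀ (φ : Γ →* A4) (x : Γ), φ x ∈ Subgroup.closure {φ a, φ b} :=
    fun φ x => (hrange φ) ▸ ⟨x, rfl⟩
  have hsurj_iff : ∀ φ : Γ →* A4, Function.Surjective ⇑φ ↔ φ a * φ b ≠ φ b * φ a := by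
    intro φ
    constructor
    · intro hs hc
      obtain ⟨x, y, hxy⟩ := A4_nonabelian
      obtain ⟨u, rfl⟩ := hs x
      obtain ⟨v, rfl⟩ := hs y
      exact hxy (comm_closure hc (hmemrange φ u) (hmemrange φ v))
    · intro hc
      rw [← MonoidHom.range_eq_top, hrange φ]
      exact A4_gen_of_noncomm hc
  have part1 : ∀ φ : Γ →* A4, ¬Function.Surjective ⇑φ → ∀ x y : Γ, φ x * φ y = φ y * φ x := by
    intro φ hns x y
    have hc : φ a * φ b = φ b * φ a := by
      by_contra hcc
      exact hns ((hsurj_iff φ).mpr hcc)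
    exact comm_closure hc (hmemrange φ x) (hmemrange φ y)
  refine ⟨part1, ?_, ?_⟩
  -- Part 2: exactly 4 classes of non-surjective homomorphisms
  · unfold ksRestrict
    have keyNS : ∀ (φ : {φ : Γ →* A4 // ¬Function.Surjective ⇑φ}) (x : Γ),
        φ.1 x = φ.1 x0 ^ (Multiplicative.toAdd (α x)) :=
      fun φ x => key A4 φ.1 (part1 φ.1 φ.2) x
    have hE_bij : Function.Bijective
        (fun φ : {φ : Γ →* A4 // ¬Function.Surjective ⇑φ} => φ.1 x0) := by
      constructor
      · intro φ ψ h
        simp only at h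
        apply Subtype.ext
        apply MonoidHom.ext
        intro x
        rw [keyNS φ x, keyNS ψ x, h]
      · intro c
        refine ⟨⟨(zpowersHom A4 c).comp α, ?_⟩, ?_⟩
        · intro hs
          rw [hsurj_iff] at hs
          apply hs
          show c ^ (Multiplicative.toAdd (α a)) * c ^ (Multiplicative.toAdd (α b)) =
            c ^ (Multiplicative.toAdd (α b)) * c ^ (Multiplicative.toAdd (α a))
          rw [← zpow_add, ← zpow_add, add_comm]
        · show c ^ (Multiplicative.toAdd (α x0)) = c
          rw [hx0, toAdd_ofAdd, zpow_one]
    have relIff : ∀ u v : {φ : Γ →* A4 // ¬Function.Surjective ⇑φ},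
        (Setoid.comap Subtype.val (homConj Γ A4)) u v ↔
          R ((Equiv.ofBijective _ hE_bij) u) ((Equiv.ofBijective _ hE_bij) v) := by
      intro u v
      rw [Setoid.comap_rel]
      constructor
      · rintro ⟨g, hg⟩
        exact ⟨g, hg x0⟩
      · rintro ⟨g, hg⟩
        refine ⟨g, fun x => ?_⟩
        rw [keyNS u x, keyNS v x]
        have hg' : v.1 x0 = g * u.1 x0 * g⁻¹ := hg
        rw [hg', ← MulAut.conj_apply, ← map_zpow, MulAut.conj_apply]
    rw [Nat.card_congr (Quotient.congr (Equiv.ofBijective _ hE_bij) relIff)]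
    exact cardQR
  -- Part 3: 0 or 2 classes of surjective homomorphisms
  · by_cases hex : ∃ φ : Γ →* A4, Function.Surjective ⇑φ
    · right
      obtain ⟨φ₀, hφ₀⟩ := hex
      unfold ksRestrict
      set ψ₀ := σh.comp φ₀ with hψ₀def
      have hψ₀ : Function.Surjective ⇑ψ₀ := σh_surj.comp hφ₀
      set SS := Setoid.comap
        (Subtype.val : {φ : Γ →* A4 // Function.Surjective ⇑φ} → (Γ →* A4))
        (homConj Γ A4) with hSS
      have main : ∀ (ψ : Γ →* A4), Function.Surjective ⇑ψ →
          (∃ g : A4, ∀ x, ψ x = g * φ₀ x * g⁻¹) ∨ (∃ g : A4, ∀ x, ψ x = g * ψ₀ x * g⁻¹) := by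
        intro ψ hψ
        have h1 := (hsurj_iff φ₀).mp hφ₀
        have h2 := (hsurj_iff ψ).mp hψ
        have hdet : pf (φ₀ a) * pf (ψ b) = pf (φ₀ b) * pf (ψ a) := by
          have hc1 : ∀ g h : Γ, (pA.comp φ₀) g * (pA.comp φ₀) h =
              (pA.comp φ₀) h * (pA.comp φ₀) g := fun g h => mul_comm _ _
          have hc2 : ∀ g h : Γ, (pA.comp ψ) g * (pA.comp ψ) h =
              (pA.comp ψ) h * (pA.comp ψ) g := fun g h => mul_comm _ _
          have k1 := key _ (pA.comp φ₀) hc1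
          have k2 := key _ (pA.comp ψ) hc2
          have t1 : pf (φ₀ a) = (Multiplicative.toAdd (α a)) • pf (φ₀ x0) := by
            have := congrArg Multiplicative.toAdd (k1 a)
            rwa [toAdd_zpow] at this
          have t2 : pf (φ₀ b) = (Multiplicative.toAdd (α b)) • pf (φ₀ x0) := by
            have := congrArg Multiplicative.toAdd (k1 b)
            rwa [toAdd_zpow] at this
          have t3 : pf (ψ a) = (Multiplicative.toAdd (α a)) • pf (ψ x0) := by
            have := congrArg Multiplicative.toAdd (k2 a)
            rwa [toAdd_zpow] at this
          have t4 : pf (ψ b) = (Multiplicative.toAdd (α b)) • pf (ψ x0) := by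
            have := congrArg Multiplicative.toAdd (k2 b)
            rwa [toAdd_zpow] at this
          rw [t1, t2, t3, t4, zsmul_eq_mul, zsmul_eq_mul, zsmul_eq_mul, zsmul_eq_mul]
          ring
        obtain ⟨g, hcase⟩ := L2 (φ₀ a) (φ₀ b) (ψ a) (ψ b) h1 h2 hdet
        rcases hcase with ⟨hga, hgb⟩ | ⟨hga, hgb⟩
        · exact Or.inl ⟨g, conj_all hgen φ₀ ψ g hga hgb⟩
        · exact Or.inr ⟨g, conj_all hgen ψ₀ ψ g hga hgb⟩
      have hne : (Quotient.mk SS ⟨φ₀, hφ₀⟩) ≠ (Quotient.mk SS ⟨ψ₀, hψ₀⟩) := by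
        intro hqe
        have hrel := Quotient.exact hqe
        have hrel' : (homConj Γ A4) φ₀ ψ₀ := hrel
        obtain ⟨g, hg⟩ := hrel'
        obtain ⟨c, hc⟩ := σh_ne g
        obtain ⟨x, rfl⟩ := hφ₀ c
        exact hc (hg x)
      rw [Nat.card_eq_two_iff]
      refine ⟨Quotient.mk SS ⟨φ₀, hφ₀⟩, Quotient.mk SS ⟨ψ₀, hψ₀⟩, hne, ?_⟩
      rw [Set.eq_univ_iff_forall]
      intro q
      induction q using Quotient.ind with
      | _ u =>
        obtain ⟨ψ, hψ⟩ := u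
        rcases main ψ hψ with ⟨g, hg⟩ | ⟨g, hg⟩
        · apply Set.mem_insert_iff.mpr
          left
          exact Quotient.sound (SS.iseqv.symm ⟨g, hg⟩)
        · apply Set.mem_insert_iff.mpr
          right
          apply Set.mem_singleton_iff.mpr
          exact Quotient.sound (SS.iseqv.symm ⟨g, hg⟩)
    · left
      unfold ksRestrict
      have hempty : IsEmpty {φ : Γ →* A4 // Function.Surjective ⇑φ} :=
        ⟨fun φ => hex ⟨φ.1, φ.2⟩⟩
      have : IsEmpty (Quotient (Setoid.comap
          (Subtype.val : {φ : Γ →* A4 // Function.Surjective ⇑φ} → (Γ →* A4))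
          (homConj Γ A4))) :=
        ⟨fun q => Quotient.ind (motive := fun _ => False) (fun φ => hempty.false φ) q⟩
      exact Nat.card_of_isEmpty
end
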